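/- arXiv:1904.03361 — 8 statements merged into one kernel-verified Lean document; each statement's English description precedes it below -/
import Mathlib

section
/- Let (f,g)^T be a non-vanishing solution of the homogeneous Dirac system. Then for continuous h_1, h_2, the functions u(x) = f(x) ∫_{x_0}^x ( -h_2(t)/f(t) + (p_2(t)/f^2(t)) ∫_{x_0}^t (f(s)h_1(s)+g(s)h_2(s)) ds ) dt and v(x) = g(x) ∫_{x_0}^x ( h_1(t)/g(t) + (p_1(t)/g^2(t)) ∫_{x_0}^t (f(s)h_1(s)+g(s)h_2(s)) ds ) dt satisfy the nonhomogeneous system v' + p_1 u + q v = h_1, -u' + q u + p_2 v = h_2 with u(x_0) = v(x_0) = 0. -/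
open Set intervalIntegral

/-- explicit integral formulas solve the nonhomogeneous Dirac system
`v' + p₁ u + q v = h₁`, `-u' + q u + p₂ v = h₂` with `u(x₀) = v(x₀) = 0`. -/
theorem nonhom_dirac_solution (a b x0 : ℝ) (hx0 : x0 ∈ Icc a b)
    (p1 p2 q h1 h2 f g : ℝ → ℂ)
    (hp1 : ContinuousOn p1 (Icc a b)) (hp2 : ContinuousOn p2 (Icc a b))
    (hq : ContinuousOn q (Icc a b))
    (hh1 : ContinuousOn h1 (Icc a b)) (hh2 : ContinuousOn h2 (Icc a b))
    (hf : ∀ x ∈ Icc a b, f x ≠ 0) (hg : ∀ x ∈ Icc a b, g x ≠ 0)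
    (hsys : ∀ x ∈ Icc a b,
      HasDerivWithinAt g (-(p1 x * f x) - q x * g x) (Icc a b) x ∧
      HasDerivWithinAt f (q x * f x + p2 x * g x) (Icc a b) x)
    (u v : ℝ → ℂ)
    (hu : u = fun x => f x * ∫ t in x0..x,
      (-(h2 t) / f t + p2 t / f t ^ 2 * ∫ s in x0..t, (f s * h1 s + g s * h2 s)))
    (hv : v = fun x => g x * ∫ t in x0..x,
      (h1 t / g t + p1 t / g t ^ 2 * ∫ s in x0..t, (f s * h1 s + g s * h2 s))) :
    u x0 = 0 ∧ v x0 = 0 ∧ ∀ x ∈ Icc a b,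
      HasDerivWithinAt v (h1 x - p1 x * u x - q x * v x) (Icc a b) x ∧
      HasDerivWithinAt u (q x * u x + p2 x * v x - h2 x) (Icc a b) x := by
  have hfc : ContinuousOn f (Icc a b) := fun x hx => ((hsys x hx).2).continuousWithinAt
  have hgc : ContinuousOn g (Icc a b) := fun x hx => ((hsys x hx).1).continuousWithinAt
  -- FTC helper
  have ftc : ∀ φ : ℝ → ℂ, ContinuousOn φ (Icc a b) → ∀ x ∈ Icc a b,
      HasDerivWithinAt (fun y => ∫ t in x0..y, φ t) (φ x) (Icc a b) x := by
    intro φ hφ x hx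
    haveI : Fact (x ∈ Icc a b) := ⟨hx⟩
    exact intervalIntegral.integral_hasDerivWithinAt_right
      ((hφ.mono (uIcc_subset_Icc hx0 hx)).intervalIntegrable)
      (hφ.stronglyMeasurableAtFilter_nhdsWithin measurableSet_Icc x)
      (hφ x hx)
  set F : ℝ → ℂ := fun y => ∫ s in x0..y, (f s * h1 s + g s * h2 s) with hFdef
  have hFintc : ContinuousOn (fun s => f s * h1 s + g s * h2 s) (Icc a b) :=
    (hfc.mul hh1).add (hgc.mul hh2)
  have hFd : ∀ x ∈ Icc a b, HasDerivWithinAt F (f x * h1 x + g x * h2 x) (Icc a b) x :=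
    ftc _ hFintc
  have hFc : ContinuousOn F (Icc a b) := fun x hx => (hFd x hx).continuousWithinAt
  set ψu : ℝ → ℂ := fun t => -(h2 t) / f t + p2 t / f t ^ 2 * F t with hψudef
  set ψv : ℝ → ℂ := fun t => h1 t / g t + p1 t / g t ^ 2 * F t with hψvdef
  have hf2 : ∀ x ∈ Icc a b, f x ^ 2 ≠ 0 := fun x hx => pow_ne_zero 2 (hf x hx)
  have hg2 : ∀ x ∈ Icc a b, g x ^ 2 ≠ 0 := fun x hx => pow_ne_zero 2 (hg x hx)
  have hψuc : ContinuousOn ψu (Icc a b) :=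
    (hh2.neg.div hfc hf).add ((hp2.div (hfc.pow 2) hf2).mul hFc)
  have hψvc : ContinuousOn ψv (Icc a b) :=
    (hh1.div hgc hg).add ((hp1.div (hgc.pow 2) hg2).mul hFc)
  set U : ℝ → ℂ := fun y => ∫ t in x0..y, ψu t with hUdef
  set V : ℝ → ℂ := fun y => ∫ t in x0..y, ψv t with hVdef
  have hUd : ∀ x ∈ Icc a b, HasDerivWithinAt U (ψu x) (Icc a b) x := ftc _ hψuc
  have hVd : ∀ x ∈ Icc a b, HasDerivWithinAt V (ψv x) (Icc a b) x := ftc _ hψvc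
  have hu' : u = fun x => f x * U x := by
    rw [hu]
  have hv' : v = fun x => g x * V x := by
    rw [hv]
  -- the key auxiliary function
  set D : ℝ → ℂ := fun y => U y - V y + F y / (f y * g y) with hDdef
  have hDd : ∀ x ∈ Icc a b, HasDerivWithinAt D 0 (Icc a b) x := by
    intro x hx
    have hfx := hf x hx
    have hgx := hg x hx
    have hfgx : f x * g x ≠ 0 := mul_ne_zero hfx hgx
    have hquot : HasDerivWithinAt (fun y => F y / (f y * g y))
        (((f x * h1 x + g x * h2 x) * (f x * g x) -
          F x * ((q x * f x + p2 x * g x) * g x + f x * (-(p1 x * f x) - q x * g x))) /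
          (f x * g x) ^ 2) (Icc a b) x :=
      (hFd x hx).div (((hsys x hx).2).mul ((hsys x hx).1)) hfgx
    have hD := ((hUd x hx).sub (hVd x hx)).add hquot
    refine hD.congr_deriv ?_
    simp only [hψudef, hψvdef]
    field_simp
    ring
  have hDc : ContinuousOn D (Icc a b) := fun x hx => (hDd x hx).continuousWithinAt
  have hDconst : ∀ x ∈ Icc a b, D x = D a :=
    constant_of_has_deriv_right_zero hDc (fun x hx =>
      (hDd x (Ico_subset_Icc_self hx)).mono_of_mem_nhdsWithin (Icc_mem_nhdsGE_of_mem hx))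
  have hDx0 : D x0 = 0 := by
    simp [hDdef, hUdef, hVdef, hFdef, intervalIntegral.integral_same]
  have key : ∀ x ∈ Icc a b, U x = V x - F x / (f x * g x) := by
    intro x hx
    have h1' : D x = 0 := (hDconst x hx).trans ((hDconst x0 hx0).symm.trans hDx0)
    simp only [hDdef] at h1'
    linear_combination h1'
  refine ⟨?_, ?_, ?_⟩
  · rw [hu']; simp [hUdef, intervalIntegral.integral_same]
  · rw [hv']; simp [hVdef, intervalIntegral.integral_same]
  · intro x hx
    have hfx := hf x hx
    have hgx := hg x hx
    have hkey := key x hx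
    constructor
    · rw [hu', hv']
      have hD := ((hsys x hx).1).mul (hVd x hx)
      refine hD.congr_deriv ?_
      simp only [hψvdef]
      rw [hkey]
      field_simp
      ring
    · rw [hu', hv']
      have hD := ((hsys x hx).2).mul (hUd x hx)
      refine hD.congr_deriv ?_
      simp only [hψudef]
      rw [hkey]
      field_simp
      ring
end

section
/- Under the hypotheses of the nonhomogeneous solution lemma, the functions u, v defined by the explicit integral formulas satisfy the identity g(x)u(x) - f(x)v(x) = -∫_{x_0}^x ( f(s) h_1(s) + g(s) h_2(s) ) ds for all x in [a,b]. -/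
open Set intervalIntegral

/-- under the hypotheses of the nonhomogeneous solution lemma, the functions
u, v defined by the explicit integral formulas satisfy
`g(x)u(x) - f(x)v(x) = -∫_{x₀}^x (f h₁ + g h₂) ds` for all x in [a,b]. -/
theorem nonhom_dirac_wronskian_identity (a b x0 : ℝ) (hx0 : x0 ∈ Icc a b)
    (p1 p2 q h1 h2 f g : ℝ → ℂ)
    (hp1 : ContinuousOn p1 (Icc a b)) (hp2 : ContinuousOn p2 (Icc a b))
    (hq : ContinuousOn q (Icc a b))
    (hh1 : ContinuousOn h1 (Icc a b)) (hh2 : ContinuousOn h2 (Icc a b))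
    (hf : ∀ x ∈ Icc a b, f x ≠ 0) (hg : ∀ x ∈ Icc a b, g x ≠ 0)
    (hsys : ∀ x ∈ Icc a b,
      HasDerivWithinAt g (-(p1 x * f x) - q x * g x) (Icc a b) x ∧
      HasDerivWithinAt f (q x * f x + p2 x * g x) (Icc a b) x)
    (u v : ℝ → ℂ)
    (hu : u = fun x => f x * ∫ t in x0..x,
      (-(h2 t) / f t + p2 t / f t ^ 2 * ∫ s in x0..t, (f s * h1 s + g s * h2 s)))
    (hv : v = fun x => g x * ∫ t in x0..x,
      (h1 t / g t + p1 t / g t ^ 2 * ∫ s in x0..t, (f s * h1 s + g s * h2 s))) :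
    ∀ x ∈ Icc a b,
      g x * u x - f x * v x = -∫ s in x0..x, (f s * h1 s + g s * h2 s) := by
  -- continuity of f and g
  have hfc : ContinuousOn f (Icc a b) := fun x hx => ((hsys x hx).2).continuousWithinAt
  have hgc : ContinuousOn g (Icc a b) := fun x hx => ((hsys x hx).1).continuousWithinAt
  set φ : ℝ → ℂ := fun s => f s * h1 s + g s * h2 s with hφdef
  have hφ : ContinuousOn φ (Icc a b) := ((hfc.mul hh1).add (hgc.mul hh2))
  set K : ℝ → ℂ := fun t => ∫ s in x0..t, φ s with hKdef
  have hφint : ∀ x ∈ Icc a b, IntervalIntegrable φ MeasureTheory.volume x0 x := fun x hx =>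
    (hφ.mono (uIcc_subset_Icc hx0 hx)).intervalIntegrable
  have hKderiv : ∀ x ∈ Icc a b, HasDerivWithinAt K (φ x) (Icc a b) x := by
    intro x hx
    haveI : Fact (x ∈ Icc a b) := ⟨hx⟩
    exact intervalIntegral.integral_hasDerivWithinAt_right (hφint x hx)
      (hφ.stronglyMeasurableAtFilter_nhdsWithin measurableSet_Icc x) (hφ x hx)
  have hKc : ContinuousOn K (Icc a b) := fun x hx => (hKderiv x hx).continuousWithinAt
  -- the integrands
  set A : ℝ → ℂ := fun t => -(h2 t) / f t + p2 t / f t ^ 2 * K t with hAdef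
  set B : ℝ → ℂ := fun t => h1 t / g t + p1 t / g t ^ 2 * K t with hBdef
  have hAc : ContinuousOn A (Icc a b) :=
    ((hh2.neg.div hfc hf).add ((hp2.div (hfc.pow 2) (fun x hx => pow_ne_zero 2 (hf x hx))).mul hKc))
  have hBc : ContinuousOn B (Icc a b) :=
    ((hh1.div hgc hg).add ((hp1.div (hgc.pow 2) (fun x hx => pow_ne_zero 2 (hg x hx))).mul hKc))
  set F : ℝ → ℂ := fun t => -K t / (f t * g t) with hFdef
  have hFc : ContinuousOn F (Icc a b) :=
    (hKc.neg.div (hfc.mul hgc) (fun x hx => mul_ne_zero (hf x hx) (hg x hx)))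
  have hFderiv : ∀ x ∈ Icc a b, HasDerivWithinAt F (A x - B x) (Icc a b) x := by
    intro x hx
    have hd := ((hKderiv x hx).neg.div (((hsys x hx).2).mul ((hsys x hx).1))
      (mul_ne_zero (hf x hx) (hg x hx)))
    convert hd using 1
    case e'_4 => rfl
    case e'_8 => rfl
    have hf0 := hf x hx
    have hg0 := hg x hx
    rw [hAdef, hBdef]
    simp only [Pi.mul_apply, Pi.neg_apply, hφdef]
    field_simp
    ring
  -- FTC
  intro x hx
  have hsub : uIcc x0 x ⊆ Icc a b := uIcc_subset_Icc hx0 hx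
  have hABint : IntervalIntegrable (fun t => A t - B t) MeasureTheory.volume x0 x :=
    ((hAc.sub hBc).mono hsub).intervalIntegrable
  have hFTC : ∫ t in x0..x, (A t - B t) = F x - F x0 := by
    apply intervalIntegral.integral_eq_sub_of_hasDeriv_right (hFc.mono hsub) _ hABint
    intro t ht
    have ht' : t ∈ Icc a b := hsub (Ioo_subset_Icc_self ht)
    refine (hFderiv t ht').mono_of_mem_nhdsWithin ?_
    have htb : t < b := lt_of_lt_of_le ht.2 (le_trans (max_le hx0.2 hx.2) le_rfl)
    exact Filter.mem_of_superset (Ioc_mem_nhdsGT_of_mem ⟨le_refl t, htb⟩)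
      (fun y hy => ⟨le_trans ht'.1 hy.1.le, hy.2⟩)
  have hFx0 : F x0 = 0 := by
    simp [hFdef, hKdef, intervalIntegral.integral_same]
  have hAint : IntervalIntegrable A MeasureTheory.volume x0 x :=
    (hAc.mono hsub).intervalIntegrable
  have hBint : IntervalIntegrable B MeasureTheory.volume x0 x :=
    (hBc.mono hsub).intervalIntegrable
  have hiAB : (∫ t in x0..x, A t) - (∫ t in x0..x, B t) = ∫ t in x0..x, (A t - B t) :=
    (intervalIntegral.integral_sub hAint hBint).symm
  have key : g x * u x - f x * v x = f x * g x * ((∫ t in x0..x, A t) - (∫ t in x0..x, B t)) := by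
    rw [hu, hv]; ring
  rw [key, hiAB, hFTC, hFx0, sub_zero, hFdef]
  have hf0 := hf x hx
  have hg0 := hg x hx
  have : f x * g x * (-K x / (f x * g x)) = -K x := by
    field_simp
  rw [this, hKdef]
end

section
/- Let (f,g)^T be a non-vanishing solution of the homogeneous Dirac system and κ = f(x_0)g(x_0). Then the vector functions Y_1(x) = ( f(x)(1 - κ ∫_{x_0}^x p_2/f^2 ds), -κ g(x) ∫_{x_0}^x p_1/g^2 ds )^T and Y_2(x) = ( κ f(x) ∫_{x_0}^x p_2/f^2 ds, g(x)(1 + κ ∫_{x_0}^x p_1/g^2 ds) )^T are solutions of the homogeneous system B Y' + P Y = 0, and they are linearly independent; hence every solution is a complex linear combination c_1 Y_1 + c_2 Y_2. -/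
open Set intervalIntegral

private lemma ftc_aux {a b x0 x : ℝ} {F : ℝ → ℂ} (hF : ContinuousOn F (Icc a b))
    (hx0 : x0 ∈ Icc a b) (hx : x ∈ Icc a b) :
    HasDerivWithinAt (fun u => ∫ s in x0..u, F s) (F x) (Icc a b) x := by
  haveI : Fact (x ∈ Icc a b) := ⟨hx⟩
  apply intervalIntegral.integral_hasDerivWithinAt_right (t := Icc a b)
  · exact (hF.mono (uIcc_subset_Icc hx0 hx)).intervalIntegrable
  · exact AEStronglyMeasurable.stronglyMeasurableAtFilter_of_mem (hF.aestronglyMeasurable measurableSet_Icc)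
      self_mem_nhdsWithin
  · exact hF x hx

private lemma const_aux {a b : ℝ} {φ : ℝ → ℂ}
    (hφ : ∀ x ∈ Icc a b, HasDerivWithinAt φ 0 (Icc a b) x)
    {x y : ℝ} (hx : x ∈ Icc a b) (hy : y ∈ Icc a b) : φ x = φ y := by
  have h := Convex.norm_image_sub_le_of_norm_hasDerivWithin_le
    (f' := fun _ => (0:ℂ)) (C := 0) hφ (fun z _ => by simp) (convex_Icc a b) hy hx
  rw [zero_mul] at h
  have := norm_le_zero_iff.mp h
  rwa [sub_eq_zero] at this

private lemma wronskian_const {a b : ℝ} {p1 p2 q u v w z : ℝ → ℂ}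
    (h1 : ∀ x ∈ Icc a b,
      HasDerivWithinAt v (-(p1 x * u x) - q x * v x) (Icc a b) x ∧
      HasDerivWithinAt u (q x * u x + p2 x * v x) (Icc a b) x)
    (h2 : ∀ x ∈ Icc a b,
      HasDerivWithinAt z (-(p1 x * w x) - q x * z x) (Icc a b) x ∧
      HasDerivWithinAt w (q x * w x + p2 x * z x) (Icc a b) x)
    {x y : ℝ} (hx : x ∈ Icc a b) (hy : y ∈ Icc a b) :
    u x * z x - v x * w x = u y * z y - v y * w y := by
  apply const_aux (φ := fun t => u t * z t - v t * w t) _ hx hy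
  intro t ht
  have hd := ((h1 t ht).2.mul (h2 t ht).1).sub ((h1 t ht).1.mul (h2 t ht).2)
  refine hd.congr_deriv ?_; symm
  ring

/-- the two explicitly given vector functions Y₁, Y₂ solve the homogeneous
Dirac system `B Y' + P Y = 0`, are linearly independent, and every solution is a complex
linear combination of them. -/
theorem hom_dirac_general_solution (a b x0 : ℝ) (hx0 : x0 ∈ Icc a b)
    (p1 p2 q f g : ℝ → ℂ)
    (hp1 : ContinuousOn p1 (Icc a b)) (hp2 : ContinuousOn p2 (Icc a b))
    (hq : ContinuousOn q (Icc a b))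
    (hf : ∀ x ∈ Icc a b, f x ≠ 0) (hg : ∀ x ∈ Icc a b, g x ≠ 0)
    (hsys : ∀ x ∈ Icc a b,
      HasDerivWithinAt g (-(p1 x * f x) - q x * g x) (Icc a b) x ∧
      HasDerivWithinAt f (q x * f x + p2 x * g x) (Icc a b) x)
    (κ : ℂ) (hκ : κ = f x0 * g x0)
    (y11 y12 y21 y22 : ℝ → ℂ)
    (h11 : y11 = fun x => f x * (1 - κ * ∫ s in x0..x, p2 s / f s ^ 2))
    (h12 : y12 = fun x => -κ * g x * ∫ s in x0..x, p1 s / g s ^ 2)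
    (h21 : y21 = fun x => κ * f x * ∫ s in x0..x, p2 s / f s ^ 2)
    (h22 : y22 = fun x => g x * (1 + κ * ∫ s in x0..x, p1 s / g s ^ 2)) :
    (∀ x ∈ Icc a b,
      HasDerivWithinAt y12 (-(p1 x * y11 x) - q x * y12 x) (Icc a b) x ∧
      HasDerivWithinAt y11 (q x * y11 x + p2 x * y12 x) (Icc a b) x ∧
      HasDerivWithinAt y22 (-(p1 x * y21 x) - q x * y22 x) (Icc a b) x ∧
      HasDerivWithinAt y21 (q x * y21 x + p2 x * y22 x) (Icc a b) x) ∧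
    LinearIndependent ℂ
      ![fun x : Icc a b => (y11 x.1, y12 x.1), fun x : Icc a b => (y21 x.1, y22 x.1)] ∧
    (∀ u v : ℝ → ℂ,
      (∀ x ∈ Icc a b,
        HasDerivWithinAt v (-(p1 x * u x) - q x * v x) (Icc a b) x ∧
        HasDerivWithinAt u (q x * u x + p2 x * v x) (Icc a b) x) →
      ∃ c1 c2 : ℂ, ∀ x ∈ Icc a b,
        u x = c1 * y11 x + c2 * y21 x ∧ v x = c1 * y12 x + c2 * y22 x) := by
  have hfx0 := hf x0 hx0
  have hgx0 := hg x0 hx0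
  have hκ0 : κ ≠ 0 := hκ ▸ mul_ne_zero hfx0 hgx0
  have hfc : ContinuousOn f (Icc a b) := fun x hx => ((hsys x hx).2).continuousWithinAt
  have hgc : ContinuousOn g (Icc a b) := fun x hx => ((hsys x hx).1).continuousWithinAt
  have hc2 : ContinuousOn (fun s => p2 s / f s ^ 2) (Icc a b) :=
    hp2.div (hfc.pow 2) (fun x hx => pow_ne_zero _ (hf x hx))
  have hc1 : ContinuousOn (fun s => p1 s / g s ^ 2) (Icc a b) :=
    hp1.div (hgc.pow 2) (fun x hx => pow_ne_zero _ (hg x hx))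
  have hdF2 : ∀ x ∈ Icc a b,
      HasDerivWithinAt (fun u => ∫ s in x0..u, p2 s / f s ^ 2) (p2 x / f x ^ 2) (Icc a b) x :=
    fun x hx => ftc_aux hc2 hx0 hx
  have hdF1 : ∀ x ∈ Icc a b,
      HasDerivWithinAt (fun u => ∫ s in x0..u, p1 s / g s ^ 2) (p1 x / g x ^ 2) (Icc a b) x :=
    fun x hx => ftc_aux hc1 hx0 hx
  have hF20 : (∫ s in x0..x0, p2 s / f s ^ 2) = 0 := intervalIntegral.integral_same
  have hF10 : (∫ s in x0..x0, p1 s / g s ^ 2) = 0 := intervalIntegral.integral_same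
  -- the key identity
  have hid : ∀ x ∈ Icc a b, κ = f x * g x *
      (1 - κ * (∫ s in x0..x, p2 s / f s ^ 2) + κ * ∫ s in x0..x, p1 s / g s ^ 2) := by
    have hconst : ∀ x ∈ Icc a b,
        κ * (f x * g x)⁻¹ + κ * (∫ s in x0..x, p2 s / f s ^ 2)
          - κ * (∫ s in x0..x, p1 s / g s ^ 2)
        = κ * (f x0 * g x0)⁻¹ + κ * (∫ s in x0..x0, p2 s / f s ^ 2)
          - κ * (∫ s in x0..x0, p1 s / g s ^ 2) := by
      intro x hx
      apply const_aux (φ := fun t => κ * (f t * g t)⁻¹ + κ * (∫ s in x0..t, p2 s / f s ^ 2)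
        - κ * ∫ s in x0..t, p1 s / g s ^ 2) _ hx hx0
      intro t ht
      have hft := hf t ht; have hgt := hg t ht
      have d1 : HasDerivWithinAt (fun s => f s * g s)
          ((q t * f t + p2 t * g t) * g t + f t * (-(p1 t * f t) - q t * g t)) (Icc a b) t :=
        (hsys t ht).2.mul (hsys t ht).1
      have d2 : HasDerivWithinAt (fun s => (f s * g s)⁻¹)
          (-((f t * g t) ^ 2)⁻¹
            * ((q t * f t + p2 t * g t) * g t + f t * (-(p1 t * f t) - q t * g t)))
          (Icc a b) t :=
        (hasDerivAt_inv (mul_ne_zero hft hgt)).comp_hasDerivWithinAt t d1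
      have d3 := ((d2.const_mul κ).add ((hdF2 t ht).const_mul κ)).sub
        ((hdF1 t ht).const_mul κ)
      refine d3.congr_deriv ?_; symm
      field_simp
      ring
    intro x hx
    have h := hconst x hx
    rw [hF20, hF10, ← hκ] at h
    have hft := hf x hx; have hgt := hg x hx
    field_simp at h
    linear_combination h
  subst h11 h12 h21 h22
  -- Part 1
  have part1 : ∀ x ∈ Icc a b,
      HasDerivWithinAt (fun x => -κ * g x * ∫ s in x0..x, p1 s / g s ^ 2)
        (-(p1 x * (f x * (1 - κ * ∫ s in x0..x, p2 s / f s ^ 2)))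
          - q x * (-κ * g x * ∫ s in x0..x, p1 s / g s ^ 2)) (Icc a b) x ∧
      HasDerivWithinAt (fun x => f x * (1 - κ * ∫ s in x0..x, p2 s / f s ^ 2))
        (q x * (f x * (1 - κ * ∫ s in x0..x, p2 s / f s ^ 2))
          + p2 x * (-κ * g x * ∫ s in x0..x, p1 s / g s ^ 2)) (Icc a b) x ∧
      HasDerivWithinAt (fun x => g x * (1 + κ * ∫ s in x0..x, p1 s / g s ^ 2))
        (-(p1 x * (κ * f x * ∫ s in x0..x, p2 s / f s ^ 2))
          - q x * (g x * (1 + κ * ∫ s in x0..x, p1 s / g s ^ 2))) (Icc a b) x ∧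
      HasDerivWithinAt (fun x => κ * f x * ∫ s in x0..x, p2 s / f s ^ 2)
        (q x * (κ * f x * ∫ s in x0..x, p2 s / f s ^ 2)
          + p2 x * (g x * (1 + κ * ∫ s in x0..x, p1 s / g s ^ 2))) (Icc a b) x := by
    intro x hx
    have hft := hf x hx; have hgt := hg x hx
    have hidx := hid x hx
    have hg' := (hsys x hx).1
    have hf' := (hsys x hx).2
    refine ⟨?_, ?_, ?_, ?_⟩
    · have hd := (hg'.const_mul (-κ)).mul (hdF1 x hx)
      refine hd.congr_deriv ?_; symm
      field_simp
      linear_combination (p1 x) * hidx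
    · have hd := hf'.mul (((hdF2 x hx).const_mul κ).const_sub 1)
      refine hd.congr_deriv ?_; symm
      field_simp
      linear_combination (p2 x) * hidx
    · have hd := hg'.mul (((hdF1 x hx).const_mul κ).const_add 1)
      refine hd.congr_deriv ?_; symm
      field_simp
      linear_combination (-(p1 x)) * hidx
    · have hd := (hf'.const_mul κ).mul (hdF2 x hx)
      refine hd.congr_deriv ?_; symm
      field_simp
      linear_combination (-(p2 x)) * hidx
  have hv11 : f x0 * (1 - κ * ∫ s in x0..x0, p2 s / f s ^ 2) = f x0 := by rw [hF20]; ring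
  have hv12 : -κ * g x0 * ∫ s in x0..x0, p1 s / g s ^ 2 = 0 := by rw [hF10]; ring
  have hv21 : κ * f x0 * ∫ s in x0..x0, p2 s / f s ^ 2 = 0 := by rw [hF20]; ring
  have hv22 : g x0 * (1 + κ * ∫ s in x0..x0, p1 s / g s ^ 2) = g x0 := by rw [hF10]; ring
  refine ⟨part1, ?_, ?_⟩
  · rw [LinearIndependent.pair_iff]
    intro s t h
    have h0 := congrFun h ⟨x0, hx0⟩
    simp only [Pi.add_apply, Pi.smul_apply, Prod.smul_mk, smul_eq_mul, Pi.zero_apply,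
      Prod.mk_add_mk, Prod.mk_eq_zero, hv11, hv12, hv21, hv22] at h0
    obtain ⟨e1, e2⟩ := h0
    rw [mul_zero, add_zero] at e1
    rw [mul_zero, zero_add] at e2
    exact ⟨(mul_eq_zero.mp e1).resolve_right hfx0, (mul_eq_zero.mp e2).resolve_right hgx0⟩
  · intro u v huv
    refine ⟨u x0 / f x0, v x0 / g x0, ?_⟩
    intro x hx
    have hs1 : ∀ z ∈ Icc a b, _ ∧ _ := fun z hz => ⟨(part1 z hz).1, (part1 z hz).2.1⟩
    have hs2 : ∀ z ∈ Icc a b, _ ∧ _ := fun z hz => ⟨(part1 z hz).2.2.1, (part1 z hz).2.2.2⟩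
    have e1 := wronskian_const huv hs1 hx hx0
    have e2 := wronskian_const huv hs2 hx hx0
    have e3 := wronskian_const hs2 hs1 hx hx0
    simp only [hv11, hv12, hv21, hv22] at e1 e2 e3
    constructor
    · field_simp
      linear_combination (-(κ * f x * ∫ s in x0..x, p2 s / f s ^ 2)) * e1
        + (f x * (1 - κ * ∫ s in x0..x, p2 s / f s ^ 2)) * e2 + u x * e3
    · field_simp
      linear_combination (-(g x * (1 + κ * ∫ s in x0..x, p1 s / g s ^ 2))) * e1
        + (-κ * g x * ∫ s in x0..x, p1 s / g s ^ 2) * e2 + v x * e3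
end

section
/- The formal powers X^{(n)}, Y^{(n)}, X̃^{(n)}, Ỹ^{(n)} defined by the SPPS recursion satisfy, for all n ≥ 0 and x ∈ [a,b], the bound max{|X^{(n)}(x)|, |Y^{(n)}(x)|, |X̃^{(n)}(x)|, |Ỹ^{(n)}(x)|} ≤ c · 2^n n! Σ_{k=0}^n C(n,k) (c_1 c_2)^k c_3^{n-k} |x-x_0|^{n+k}/(n+k)!, where c, c_1, c_2, c_3 are the max-norm constants c = max of the sup norms of the four zeroth formal powers, c_1 = max{‖f²r_{11}+g²r_{21}‖, ‖f²r_{12}+g²r_{22}‖}, c_2 = max{‖p_1/g²‖, ‖p_2/f²‖}, c_3 = max{‖r_{11} f/g‖, ‖r_{12}‖, ‖r_{21}‖, ‖r_{22} g/f‖}. -/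
open Set intervalIntegral MeasureTheory
open Interval

/-- The SPPS formal powers `(X⁽ⁿ⁾, Y⁽ⁿ⁾)` defined by the recursion
`X⁽ⁿ⁺¹⁾ = (n+1)∫ (-r₂₁ X⁽ⁿ⁾ - r₂₂ (g/f) Y⁽ⁿ⁾ + (p₂/f²) Z⁽ⁿ⁾)`,
`Y⁽ⁿ⁺¹⁾ = (n+1)∫ (r₁₁ (f/g) X⁽ⁿ⁾ + r₁₂ Y⁽ⁿ⁾ + (p₁/g²) Z⁽ⁿ⁾)`, where
`Z⁽ⁿ⁾ = ∫ (X⁽ⁿ⁾(f²r₁₁+g²r₂₁) + Y⁽ⁿ⁾(f²r₁₂+g²r₂₂))`. -/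
noncomputable def spps (p1 p2 r11 r12 r21 r22 f g : ℝ → ℂ) (x0 : ℝ) (X0 Y0 : ℝ → ℂ) :
    ℕ → (ℝ → ℂ) × (ℝ → ℂ)
  | 0 => (X0, Y0)
  | n + 1 =>
    let X := (spps p1 p2 r11 r12 r21 r22 f g x0 X0 Y0 n).1
    let Y := (spps p1 p2 r11 r12 r21 r22 f g x0 X0 Y0 n).2
    let Z : ℝ → ℂ := fun x => ∫ s in x0..x,
      (X s * (f s ^ 2 * r11 s + g s ^ 2 * r21 s) + Y s * (f s ^ 2 * r12 s + g s ^ 2 * r22 s))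
    (fun x => (n + 1 : ℂ) * ∫ s in x0..x,
        (-(r21 s) * X s - r22 s * (g s / f s) * Y s + p2 s / f s ^ 2 * Z s),
     fun x => (n + 1 : ℂ) * ∫ s in x0..x,
        (r11 s * (f s / g s) * X s + r12 s * Y s + p1 s / g s ^ 2 * Z s))

/-- The SPPS formal power `Z⁽ⁿ⁾`. -/
noncomputable def sppsZ (p1 p2 r11 r12 r21 r22 f g : ℝ → ℂ) (x0 : ℝ) (X0 Y0 : ℝ → ℂ)
    (n : ℕ) : ℝ → ℂ := fun x => ∫ s in x0..x,
      ((spps p1 p2 r11 r12 r21 r22 f g x0 X0 Y0 n).1 s * (f s ^ 2 * r11 s + g s ^ 2 * r21 s)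
        + (spps p1 p2 r11 r12 r21 r22 f g x0 X0 Y0 n).2 s * (f s ^ 2 * r12 s + g s ^ 2 * r22 s))

/-- Initial formal power `X⁽⁰⁾(x) = f(x₀)g(x₀) ∫_{x₀}^x p₂/f²`. -/
noncomputable def sppsX0 (p2 f g : ℝ → ℂ) (x0 : ℝ) : ℝ → ℂ :=
  fun x => f x0 * g x0 * ∫ s in x0..x, p2 s / f s ^ 2

/-- Initial formal power `Y⁽⁰⁾(x) = 1 + f(x₀)g(x₀) ∫_{x₀}^x p₁/g²`. -/
noncomputable def sppsY0 (p1 f g : ℝ → ℂ) (x0 : ℝ) : ℝ → ℂ :=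
  fun x => 1 + f x0 * g x0 * ∫ s in x0..x, p1 s / g s ^ 2

/-- Initial formal power `X̃⁽⁰⁾(x) = 1 - f(x₀)g(x₀) ∫_{x₀}^x p₂/f²`. -/
noncomputable def sppsXt0 (p2 f g : ℝ → ℂ) (x0 : ℝ) : ℝ → ℂ :=
  fun x => 1 - f x0 * g x0 * ∫ s in x0..x, p2 s / f s ^ 2

/-- Initial formal power `Ỹ⁽⁰⁾(x) = -f(x₀)g(x₀) ∫_{x₀}^x p₁/g²`. -/
noncomputable def sppsYt0 (p1 f g : ℝ → ℂ) (x0 : ℝ) : ℝ → ℂ :=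
  fun x => -(f x0 * g x0) * ∫ s in x0..x, p1 s / g s ^ 2

/-- The max-norm (sup norm) of a function on `[a,b]`. -/
noncomputable def supNorm (a b : ℝ) (h : ℝ → ℂ) : ℝ :=
  sSup ((fun x => ‖h x‖) '' Icc a b)

lemma spps_succ_fst (p1 p2 r11 r12 r21 r22 f g : ℝ → ℂ) (x0 : ℝ) (X0 Y0 : ℝ → ℂ) (n : ℕ) :
    (spps p1 p2 r11 r12 r21 r22 f g x0 X0 Y0 (n + 1)).1 = fun x => (n + 1 : ℂ) *
      ∫ s in x0..x,
        (-(r21 s) * (spps p1 p2 r11 r12 r21 r22 f g x0 X0 Y0 n).1 s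
          - r22 s * (g s / f s) * (spps p1 p2 r11 r12 r21 r22 f g x0 X0 Y0 n).2 s
          + p2 s / f s ^ 2 * sppsZ p1 p2 r11 r12 r21 r22 f g x0 X0 Y0 n s) := rfl

lemma spps_succ_snd (p1 p2 r11 r12 r21 r22 f g : ℝ → ℂ) (x0 : ℝ) (X0 Y0 : ℝ → ℂ) (n : ℕ) :
    (spps p1 p2 r11 r12 r21 r22 f g x0 X0 Y0 (n + 1)).2 = fun x => (n + 1 : ℂ) *
      ∫ s in x0..x,
        (r11 s * (f s / g s) * (spps p1 p2 r11 r12 r21 r22 f g x0 X0 Y0 n).1 s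
          + r12 s * (spps p1 p2 r11 r12 r21 r22 f g x0 X0 Y0 n).2 s
          + p1 s / g s ^ 2 * sppsZ p1 p2 r11 r12 r21 r22 f g x0 X0 Y0 n s) := rfl

noncomputable def sppsBound (c c1 c2 c3 x0 : ℝ) (n : ℕ) (x : ℝ) : ℝ :=
  c * 2 ^ n * (n.factorial : ℝ) * ∑ k ∈ Finset.range (n + 1),
    (n.choose k : ℝ) * (c1 * c2) ^ k * c3 ^ (n - k) * |x - x0| ^ (n + k)
      / ((n + k).factorial : ℝ)

lemma SPPS.IntBound {ι : Type*} (t : Finset ι) (x0 x : ℝ) (h : ℝ → ℂ)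
    (hint : IntervalIntegrable h MeasureTheory.volume x0 x)
    (aa : ι → ℝ) (mm : ι → ℕ) (ha : ∀ k ∈ t, 0 ≤ aa k)
    (hb : ∀ s ∈ Ι x0 x, ‖h s‖ ≤ ∑ k ∈ t, aa k * |s - x0| ^ mm k) :
    ‖∫ s in x0..x, h s‖ ≤
      ∑ k ∈ t, aa k * (|x - x0| ^ (mm k + 1) / ((mm k + 1 : ℕ) : ℝ)) := by
  have hφc : Continuous (fun s => ∑ k ∈ t, aa k * |s - x0| ^ mm k) := by
    refine continuous_finset_sum t fun k _ => continuous_const.mul ?_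
    exact ((continuous_id.sub continuous_const).abs).pow _
  have h1 : ‖∫ s in x0..x, h s‖ ≤ |∫ s in x0..x, ∑ k ∈ t, aa k * |s - x0| ^ mm k| := by
    refine intervalIntegral.norm_integral_le_abs_of_norm_le ?_ (hφc.intervalIntegrable _ _)
    refine (ae_restrict_iff' measurableSet_uIoc).mpr (Filter.Eventually.of_forall ?_)
    intro s hs
    simpa using hb s hs
  have h2 : (∫ s in Ι x0 x, ∑ k ∈ t, aa k * |s - x0| ^ mm k) =
      ∑ k ∈ t, aa k * (|x - x0| ^ (mm k + 1) / ((mm k + 1 : ℕ) : ℝ)) := by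
    rw [MeasureTheory.integral_finset_sum]
    · refine Finset.sum_congr rfl fun k _ => ?_
      rw [MeasureTheory.integral_const_mul, integral_pow_abs_sub_uIoc]
      push_cast
      ring
    · intro k _
      exact (continuous_const.mul
        (((continuous_id.sub continuous_const).abs).pow _)).integrableOn_uIoc
  have h3 : |∫ s in x0..x, ∑ k ∈ t, aa k * |s - x0| ^ mm k| =
      ∑ k ∈ t, aa k * (|x - x0| ^ (mm k + 1) / ((mm k + 1 : ℕ) : ℝ)) := by
    rw [intervalIntegral_eq_integral_uIoc, smul_eq_mul, abs_mul, h2]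
    have hnn : 0 ≤ ∑ k ∈ t, aa k * (|x - x0| ^ (mm k + 1) / ((mm k + 1 : ℕ) : ℝ)) := by
      refine Finset.sum_nonneg fun k hk => mul_nonneg (ha k hk) ?_
      positivity
    rw [abs_of_nonneg hnn]
    split_ifs <;> simp
  exact h1.trans_eq h3

lemma SPPS.ChooseId (n : ℕ) (v : ℕ → ℝ) :
    ∑ k ∈ Finset.range (n + 1 + 1), ((n + 1).choose k : ℝ) * v k
      = ∑ k ∈ Finset.range (n + 1), (n.choose k : ℝ) * v k
        + ∑ k ∈ Finset.range (n + 1), (n.choose k : ℝ) * v (k + 1) := by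
  rw [Finset.sum_range_succ' _ (n + 1)]
  have e1 : ∀ k ∈ Finset.range (n + 1), (((n + 1).choose (k + 1) : ℕ) : ℝ) * v (k + 1)
      = (n.choose k : ℝ) * v (k + 1) + (n.choose (k + 1) : ℝ) * v (k + 1) := by
    intro k _; rw [Nat.choose_succ_succ]; push_cast; ring
  rw [Finset.sum_congr rfl e1, Finset.sum_add_distrib,
    Finset.sum_range_succ (fun k => ((n.choose (k + 1) : ℕ) : ℝ) * v (k + 1)) n,
    Finset.sum_range_succ' (fun k => ((n.choose k : ℕ) : ℝ) * v k) n]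
  simp [Nat.choose_succ_self]
  ring

lemma SPPS.Term1 (n k : ℕ) (hk : k ≤ n) (c c1 c2 c3 d : ℝ) :
    ((n : ℝ) + 1) * ((2 * c3 * (c * 2 ^ n * (n.factorial : ℝ) *
        ((n.choose k : ℝ) * (c1 * c2) ^ k * c3 ^ (n - k) / ((n + k).factorial : ℝ)))) *
        (d ^ (n + k + 1) / ((n + k + 1 : ℕ) : ℝ)))
      = c * 2 ^ (n + 1) * (((n + 1).factorial : ℝ)) *
        ((n.choose k : ℝ) * ((c1 * c2) ^ k * c3 ^ (n + 1 - k) * d ^ (n + 1 + k)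
          / ((n + 1 + k).factorial : ℝ))) := by
  have h1 : n + 1 - k = (n - k) + 1 := by omega
  have h2 : n + 1 + k = (n + k) + 1 := by omega
  rw [h1, h2, pow_succ c3, pow_succ (2:ℝ) n, Nat.factorial_succ (n+k), Nat.factorial_succ n]
  have hf : ((n + k).factorial : ℝ) ≠ 0 := Nat.cast_ne_zero.mpr (Nat.factorial_ne_zero _)
  have hs : ((n + k + 1 : ℕ) : ℝ) ≠ 0 := Nat.cast_ne_zero.mpr (by omega)
  push_cast
  field_simp

lemma SPPS.Term2 (n k : ℕ) (hk : k ≤ n) (c c1 c2 c3 d : ℝ) :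
    ((n : ℝ) + 1) * ((2 * c1 * c2 * (c * 2 ^ n * (n.factorial : ℝ) *
        ((n.choose k : ℝ) * (c1 * c2) ^ k * c3 ^ (n - k) / ((n + k).factorial : ℝ)))
        / ((n + k + 1 : ℕ) : ℝ)) *
        (d ^ (n + k + 1 + 1) / ((n + k + 1 + 1 : ℕ) : ℝ)))
      = c * 2 ^ (n + 1) * (((n + 1).factorial : ℝ)) *
        ((n.choose k : ℝ) * ((c1 * c2) ^ (k + 1) * c3 ^ (n + 1 - (k + 1)) * d ^ (n + 1 + (k + 1))
          / ((n + 1 + (k + 1)).factorial : ℝ))) := by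
  have h1 : n + 1 - (k + 1) = n - k := by omega
  have h2 : n + 1 + (k + 1) = ((n + k) + 1) + 1 := by omega
  rw [h1, h2, pow_succ (c1*c2), pow_succ (2:ℝ) n,
    Nat.factorial_succ ((n+k)+1), Nat.factorial_succ (n+k), Nat.factorial_succ n]
  have hf : ((n + k).factorial : ℝ) ≠ 0 := Nat.cast_ne_zero.mpr (Nat.factorial_ne_zero _)
  have hs : ((n + k + 1 : ℕ) : ℝ) ≠ 0 := Nat.cast_ne_zero.mpr (by omega)
  have hs2 : ((n + k + 1 + 1 : ℕ) : ℝ) ≠ 0 := Nat.cast_ne_zero.mpr (by omega)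
  push_cast
  field_simp

lemma SPPS.StepAlg (n : ℕ) (c c1 c2 c3 d : ℝ) :
    ((n : ℝ) + 1) * ((∑ k ∈ Finset.range (n + 1),
        (2 * c3 * (c * 2 ^ n * (n.factorial : ℝ) *
          ((n.choose k : ℝ) * (c1 * c2) ^ k * c3 ^ (n - k) / ((n + k).factorial : ℝ)))) *
          (d ^ (n + k + 1) / ((n + k + 1 : ℕ) : ℝ)))
      + ∑ k ∈ Finset.range (n + 1),
        (2 * c1 * c2 * (c * 2 ^ n * (n.factorial : ℝ) *
          ((n.choose k : ℝ) * (c1 * c2) ^ k * c3 ^ (n - k) / ((n + k).factorial : ℝ)))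
          / ((n + k + 1 : ℕ) : ℝ)) *
          (d ^ (n + k + 1 + 1) / ((n + k + 1 + 1 : ℕ) : ℝ)))
      = c * 2 ^ (n + 1) * (((n + 1).factorial : ℝ)) * ∑ k ∈ Finset.range (n + 1 + 1),
          ((n + 1).choose k : ℝ) * (c1 * c2) ^ k * c3 ^ (n + 1 - k) * d ^ (n + 1 + k)
            / ((n + 1 + k).factorial : ℝ) := by
  set v : ℕ → ℝ := fun k => (c1 * c2) ^ k * c3 ^ (n + 1 - k) * d ^ (n + 1 + k)
    / ((n + 1 + k).factorial : ℝ) with hv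
  have h1 : ∑ k ∈ Finset.range (n + 1 + 1),
      ((n + 1).choose k : ℝ) * (c1 * c2) ^ k * c3 ^ (n + 1 - k) * d ^ (n + 1 + k)
        / ((n + 1 + k).factorial : ℝ)
      = ∑ k ∈ Finset.range (n + 1 + 1), ((n + 1).choose k : ℝ) * v k :=
    Finset.sum_congr rfl fun k _ => by rw [hv]; ring
  rw [h1, SPPS.ChooseId, mul_add, Finset.mul_sum, Finset.mul_sum, mul_add, Finset.mul_sum,
    Finset.mul_sum]
  congr 1
  · exact Finset.sum_congr rfl fun k hk => by
      rw [hv]; exact SPPS.Term1 n k (Nat.lt_succ_iff.mp (Finset.mem_range.mp hk)) c c1 c2 c3 d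
  · exact Finset.sum_congr rfl fun k hk => by
      rw [hv]; exact SPPS.Term2 n k (Nat.lt_succ_iff.mp (Finset.mem_range.mp hk)) c c1 c2 c3 d

lemma SPPS.ContPrim (a b x0 : ℝ) (hab : a ≤ b) (hx0 : x0 ∈ Icc a b) (w : ℝ → ℂ)
    (hw : ContinuousOn w (Icc a b)) :
    ContinuousOn (fun x => ∫ s in x0..x, w s) (Icc a b) := by
  have huIcc : uIcc a b = Icc a b := uIcc_of_le hab
  have h_int : IntervalIntegrable w volume a b :=
    ContinuousOn.intervalIntegrable (by rw [huIcc]; exact hw)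
  have := intervalIntegral.continuousOn_primitive_interval' h_int
    (by rw [huIcc]; exact hx0)
  rwa [huIcc] at this

lemma SPPS.IntSub (a b x0 x : ℝ) (hab : a ≤ b) (hx0 : x0 ∈ Icc a b) (hx : x ∈ Icc a b)
    (w : ℝ → ℂ) (hw : ContinuousOn w (Icc a b)) :
    IntervalIntegrable w volume x0 x := by
  have huIcc : uIcc a b = Icc a b := uIcc_of_le hab
  have h_int : IntervalIntegrable w volume a b :=
    ContinuousOn.intervalIntegrable (by rw [huIcc]; exact hw)
  exact h_int.mono_set (by rw [huIcc]; exact uIcc_subset_Icc hx0 hx)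

lemma SPPS.UIocSub (a b x0 x : ℝ) (hx0 : x0 ∈ Icc a b) (hx : x ∈ Icc a b) :
    Ι x0 x ⊆ Icc a b :=
  fun _ hs => uIcc_subset_Icc hx0 hx (uIoc_subset_uIcc hs)

lemma SPPS.Est (a b x0 : ℝ) (hab : a ≤ b) (hx0 : x0 ∈ Icc a b)
    (p1 p2 r11 r12 r21 r22 f g X0 Y0 : ℝ → ℂ) (c c1 c2 c3 : ℝ)
    (hA1 : ContinuousOn (fun x => f x ^ 2 * r11 x + g x ^ 2 * r21 x) (Icc a b))
    (hA2 : ContinuousOn (fun x => f x ^ 2 * r12 x + g x ^ 2 * r22 x) (Icc a b))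
    (h21 : ContinuousOn r21 (Icc a b))
    (h22 : ContinuousOn (fun x => r22 x * (g x / f x)) (Icc a b))
    (hP2 : ContinuousOn (fun x => p2 x / f x ^ 2) (Icc a b))
    (h11 : ContinuousOn (fun x => r11 x * (f x / g x)) (Icc a b))
    (h12 : ContinuousOn r12 (Icc a b))
    (hP1 : ContinuousOn (fun x => p1 x / g x ^ 2) (Icc a b))
    (hX0 : ContinuousOn X0 (Icc a b)) (hY0 : ContinuousOn Y0 (Icc a b))
    (bA1 : ∀ x ∈ Icc a b, ‖f x ^ 2 * r11 x + g x ^ 2 * r21 x‖ ≤ c1)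
    (bA2 : ∀ x ∈ Icc a b, ‖f x ^ 2 * r12 x + g x ^ 2 * r22 x‖ ≤ c1)
    (b21 : ∀ x ∈ Icc a b, ‖r21 x‖ ≤ c3)
    (b22 : ∀ x ∈ Icc a b, ‖r22 x * (g x / f x)‖ ≤ c3)
    (b11 : ∀ x ∈ Icc a b, ‖r11 x * (f x / g x)‖ ≤ c3)
    (b12 : ∀ x ∈ Icc a b, ‖r12 x‖ ≤ c3)
    (bP2 : ∀ x ∈ Icc a b, ‖p2 x / f x ^ 2‖ ≤ c2)
    (bP1 : ∀ x ∈ Icc a b, ‖p1 x / g x ^ 2‖ ≤ c2)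
    (bX0 : ∀ x ∈ Icc a b, ‖X0 x‖ ≤ c)
    (bY0 : ∀ x ∈ Icc a b, ‖Y0 x‖ ≤ c) :
    ∀ n : ℕ,
      ContinuousOn (spps p1 p2 r11 r12 r21 r22 f g x0 X0 Y0 n).1 (Icc a b) ∧
      ContinuousOn (spps p1 p2 r11 r12 r21 r22 f g x0 X0 Y0 n).2 (Icc a b) ∧
      ∀ x ∈ Icc a b,
        ‖(spps p1 p2 r11 r12 r21 r22 f g x0 X0 Y0 n).1 x‖
          ≤ sppsBound c c1 c2 c3 x0 n x ∧
        ‖(spps p1 p2 r11 r12 r21 r22 f g x0 X0 Y0 n).2 x‖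
          ≤ sppsBound c c1 c2 c3 x0 n x := by
  have hc1 : 0 ≤ c1 := le_trans (norm_nonneg _) (bA1 x0 hx0)
  have hc2 : 0 ≤ c2 := le_trans (norm_nonneg _) (bP1 x0 hx0)
  have hc3 : 0 ≤ c3 := le_trans (norm_nonneg _) (b12 x0 hx0)
  have hc : 0 ≤ c := le_trans (norm_nonneg _) (bX0 x0 hx0)
  intro n
  induction n with
  | zero =>
    refine ⟨hX0, hY0, fun x hx => ?_⟩
    have hB0 : sppsBound c c1 c2 c3 x0 0 x = c := by simp [sppsBound]
    rw [hB0]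
    exact ⟨bX0 x hx, bY0 x hx⟩
  | succ n IH =>
    obtain ⟨contX, contY, hbnd⟩ := IH
    set X := (spps p1 p2 r11 r12 r21 r22 f g x0 X0 Y0 n).1 with hXdef
    set Y := (spps p1 p2 r11 r12 r21 r22 f g x0 X0 Y0 n).2 with hYdef
    set u : ℕ → ℝ := fun k => c * 2 ^ n * (n.factorial : ℝ) *
      ((n.choose k : ℝ) * (c1 * c2) ^ k * c3 ^ (n - k) / ((n + k).factorial : ℝ)) with hu
    have hunn : ∀ k, 0 ≤ u k := fun k => by
      rw [hu]
      have : (0:ℝ) ≤ (n.choose k : ℝ) := Nat.cast_nonneg _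
      positivity
    have hBsum : ∀ s : ℝ, sppsBound c c1 c2 c3 x0 n s
        = ∑ k ∈ Finset.range (n + 1), u k * |s - x0| ^ (n + k) := fun s => by
      rw [sppsBound, Finset.mul_sum]
      exact Finset.sum_congr rfl fun k _ => by rw [hu]; ring
    have hBnn : ∀ s : ℝ, 0 ≤ sppsBound c c1 c2 c3 x0 n s := fun s => by
      rw [hBsum s]
      exact Finset.sum_nonneg fun k _ => mul_nonneg (hunn k) (pow_nonneg (abs_nonneg _) _)
    set Z := sppsZ p1 p2 r11 r12 r21 r22 f g x0 X0 Y0 n with hZdef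
    have hWZ : ContinuousOn (fun s => X s * (f s ^ 2 * r11 s + g s ^ 2 * r21 s)
        + Y s * (f s ^ 2 * r12 s + g s ^ 2 * r22 s)) (Icc a b) :=
      (contX.mul hA1).add (contY.mul hA2)
    have contZ : ContinuousOn Z (Icc a b) := SPPS.ContPrim a b x0 hab hx0 _ hWZ
    have hZb : ∀ x ∈ Icc a b, ‖Z x‖
        ≤ ∑ k ∈ Finset.range (n + 1),
            (2 * c1 * u k) * (|x - x0| ^ (n + k + 1) / ((n + k + 1 : ℕ) : ℝ)) := by
      intro x hx
      refine SPPS.IntBound (Finset.range (n + 1)) x0 x _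
        (SPPS.IntSub a b x0 x hab hx0 hx _ hWZ)
        (fun k => 2 * c1 * u k) (fun k => n + k)
        (fun k _ => mul_nonneg (by positivity) (hunn k)) ?_
      intro s hs
      have hsI : s ∈ Icc a b := SPPS.UIocSub a b x0 x hx0 hx hs
      have key : ‖X s * (f s ^ 2 * r11 s + g s ^ 2 * r21 s)
          + Y s * (f s ^ 2 * r12 s + g s ^ 2 * r22 s)‖
          ≤ 2 * c1 * sppsBound c c1 c2 c3 x0 n s := by
        calc ‖X s * (f s ^ 2 * r11 s + g s ^ 2 * r21 s)
              + Y s * (f s ^ 2 * r12 s + g s ^ 2 * r22 s)‖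
            ≤ ‖X s * (f s ^ 2 * r11 s + g s ^ 2 * r21 s)‖
              + ‖Y s * (f s ^ 2 * r12 s + g s ^ 2 * r22 s)‖ :=
              norm_add_le _ _
          _ = ‖X s‖ * ‖f s ^ 2 * r11 s + g s ^ 2 * r21 s‖
              + ‖Y s‖ * ‖f s ^ 2 * r12 s + g s ^ 2 * r22 s‖ := by
              rw [norm_mul, norm_mul]
          _ ≤ sppsBound c c1 c2 c3 x0 n s * c1 + sppsBound c c1 c2 c3 x0 n s * c1 :=
              add_le_add
                (mul_le_mul (hbnd s hsI).1 (bA1 s hsI) (norm_nonneg _) (hBnn s))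
                (mul_le_mul (hbnd s hsI).2 (bA2 s hsI) (norm_nonneg _) (hBnn s))
          _ = 2 * c1 * sppsBound c c1 c2 c3 x0 n s := by ring
      refine key.trans (le_of_eq ?_)
      rw [hBsum s, Finset.mul_sum]
      exact Finset.sum_congr rfl fun k _ => by ring
    have main : ∀ h : ℝ → ℂ, ContinuousOn h (Icc a b) →
        (∀ s ∈ Icc a b, ‖h s‖ ≤ 2 * c3 * sppsBound c c1 c2 c3 x0 n s
          + c2 * (∑ k ∈ Finset.range (n + 1),
              (2 * c1 * u k) * (|s - x0| ^ (n + k + 1) / ((n + k + 1 : ℕ) : ℝ)))) →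
        ∀ x ∈ Icc a b, ((n : ℝ) + 1) * ‖∫ s in x0..x, h s‖
          ≤ sppsBound c c1 c2 c3 x0 (n + 1) x := by
      intro h hcont hptw x hx
      have hIB := SPPS.IntBound ((Finset.range (n + 1)).disjSum (Finset.range (n + 1))) x0 x h
        (SPPS.IntSub a b x0 x hab hx0 hx _ hcont)
        (Sum.elim (fun k => 2 * c3 * u k) (fun k => 2 * c1 * c2 * u k / ((n + k + 1 : ℕ) : ℝ)))
        (Sum.elim (fun k => n + k) (fun k => n + k + 1))
        (by
          rintro (k | k) _
          · exact mul_nonneg (by positivity) (hunn k)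
          · exact div_nonneg (mul_nonneg (by positivity) (hunn k)) (Nat.cast_nonneg _))
        (by
          intro s hs
          have hsI : s ∈ Icc a b := SPPS.UIocSub a b x0 x hx0 hx hs
          rw [Finset.sum_disjSum]
          simp only [Sum.elim_inl, Sum.elim_inr]
          refine (hptw s hsI).trans (le_of_eq ?_)
          congr 1
          · rw [hBsum s, Finset.mul_sum]
            exact Finset.sum_congr rfl fun k _ => by ring
          · rw [Finset.mul_sum]
            exact Finset.sum_congr rfl fun k _ => by ring)
      rw [Finset.sum_disjSum] at hIB
      simp only [Sum.elim_inl, Sum.elim_inr] at hIB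
      calc ((n : ℝ) + 1) * ‖∫ s in x0..x, h s‖
          ≤ ((n : ℝ) + 1) * ((∑ k ∈ Finset.range (n + 1),
              (2 * c3 * u k) * (|x - x0| ^ (n + k + 1) / ((n + k + 1 : ℕ) : ℝ)))
            + ∑ k ∈ Finset.range (n + 1),
              (2 * c1 * c2 * u k / ((n + k + 1 : ℕ) : ℝ))
                * (|x - x0| ^ (n + k + 1 + 1) / ((n + k + 1 + 1 : ℕ) : ℝ))) := by
            refine mul_le_mul_of_nonneg_left ?_ (by positivity)
            exact hIB
        _ = sppsBound c c1 c2 c3 x0 (n + 1) x := by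
            rw [sppsBound]
            simp only [hu]
            exact SPPS.StepAlg n c c1 c2 c3 |x - x0|
    have contW1 : ContinuousOn (fun s => -(r21 s) * X s - r22 s * (g s / f s) * Y s
        + p2 s / f s ^ 2 * Z s) (Icc a b) :=
      ((h21.neg.mul contX).sub (h22.mul contY)).add (hP2.mul contZ)
    have contW2 : ContinuousOn (fun s => r11 s * (f s / g s) * X s + r12 s * Y s
        + p1 s / g s ^ 2 * Z s) (Icc a b) :=
      ((h11.mul contX).add (h12.mul contY)).add (hP1.mul contZ)
    have habsn : ‖(n : ℂ) + 1‖ = (n : ℝ) + 1 := by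
      rw [show ((n : ℂ) + 1) = ((n + 1 : ℕ) : ℂ) by push_cast; ring, Complex.norm_natCast]
      push_cast; ring
    have bW1 : ∀ s ∈ Icc a b, ‖-(r21 s) * X s - r22 s * (g s / f s) * Y s
        + p2 s / f s ^ 2 * Z s‖ ≤ 2 * c3 * sppsBound c c1 c2 c3 x0 n s
          + c2 * (∑ k ∈ Finset.range (n + 1),
              (2 * c1 * u k) * (|s - x0| ^ (n + k + 1) / ((n + k + 1 : ℕ) : ℝ))) := by
      intro s hsI
      have t1 : ‖-(r21 s) * X s‖ ≤ c3 * sppsBound c c1 c2 c3 x0 n s := by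
        rw [norm_mul, norm_neg]
        exact mul_le_mul (b21 s hsI) (hbnd s hsI).1 (norm_nonneg _) hc3
      have t2 : ‖r22 s * (g s / f s) * Y s‖ ≤ c3 * sppsBound c c1 c2 c3 x0 n s := by
        rw [norm_mul]
        exact mul_le_mul (b22 s hsI) (hbnd s hsI).2 (norm_nonneg _) hc3
      have t3 : ‖p2 s / f s ^ 2 * Z s‖ ≤ c2 * (∑ k ∈ Finset.range (n + 1),
          (2 * c1 * u k) * (|s - x0| ^ (n + k + 1) / ((n + k + 1 : ℕ) : ℝ))) := by
        rw [norm_mul]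
        refine mul_le_mul (bP2 s hsI) (hZb s hsI) (norm_nonneg _) hc2
      calc ‖-(r21 s) * X s - r22 s * (g s / f s) * Y s + p2 s / f s ^ 2 * Z s‖
          ≤ ‖-(r21 s) * X s - r22 s * (g s / f s) * Y s‖
            + ‖p2 s / f s ^ 2 * Z s‖ := norm_add_le _ _
        _ ≤ (‖-(r21 s) * X s‖ + ‖r22 s * (g s / f s) * Y s‖)
            + ‖p2 s / f s ^ 2 * Z s‖ :=
            add_le_add (norm_sub_le _ _) le_rfl
        _ ≤ (c3 * sppsBound c c1 c2 c3 x0 n s + c3 * sppsBound c c1 c2 c3 x0 n s)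
            + c2 * (∑ k ∈ Finset.range (n + 1),
              (2 * c1 * u k) * (|s - x0| ^ (n + k + 1) / ((n + k + 1 : ℕ) : ℝ))) :=
            add_le_add (add_le_add t1 t2) t3
        _ = _ := by ring
    have bW2 : ∀ s ∈ Icc a b, ‖r11 s * (f s / g s) * X s + r12 s * Y s
        + p1 s / g s ^ 2 * Z s‖ ≤ 2 * c3 * sppsBound c c1 c2 c3 x0 n s
          + c2 * (∑ k ∈ Finset.range (n + 1),
              (2 * c1 * u k) * (|s - x0| ^ (n + k + 1) / ((n + k + 1 : ℕ) : ℝ))) := by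
      intro s hsI
      have t1 : ‖r11 s * (f s / g s) * X s‖ ≤ c3 * sppsBound c c1 c2 c3 x0 n s := by
        rw [norm_mul]
        exact mul_le_mul (b11 s hsI) (hbnd s hsI).1 (norm_nonneg _) hc3
      have t2 : ‖r12 s * Y s‖ ≤ c3 * sppsBound c c1 c2 c3 x0 n s := by
        rw [norm_mul]
        exact mul_le_mul (b12 s hsI) (hbnd s hsI).2 (norm_nonneg _) hc3
      have t3 : ‖p1 s / g s ^ 2 * Z s‖ ≤ c2 * (∑ k ∈ Finset.range (n + 1),
          (2 * c1 * u k) * (|s - x0| ^ (n + k + 1) / ((n + k + 1 : ℕ) : ℝ))) := by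
        rw [norm_mul]
        exact mul_le_mul (bP1 s hsI) (hZb s hsI) (norm_nonneg _) hc2
      calc ‖r11 s * (f s / g s) * X s + r12 s * Y s + p1 s / g s ^ 2 * Z s‖
          ≤ ‖r11 s * (f s / g s) * X s + r12 s * Y s‖
            + ‖p1 s / g s ^ 2 * Z s‖ := norm_add_le _ _
        _ ≤ (‖r11 s * (f s / g s) * X s‖ + ‖r12 s * Y s‖)
            + ‖p1 s / g s ^ 2 * Z s‖ :=
            add_le_add (norm_add_le _ _) le_rfl
        _ ≤ _ := add_le_add (add_le_add t1 t2) t3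
        _ = _ := by ring
    refine ⟨?_, ?_, ?_⟩
    · rw [spps_succ_fst]
      exact continuousOn_const.mul (SPPS.ContPrim a b x0 hab hx0 _ contW1)
    · rw [spps_succ_snd]
      exact continuousOn_const.mul (SPPS.ContPrim a b x0 hab hx0 _ contW2)
    · intro x hx
      constructor
      · rw [spps_succ_fst]
        simp only
        rw [norm_mul, habsn]
        exact main _ contW1 bW1 x hx
      · rw [spps_succ_snd]
        simp only
        rw [norm_mul, habsn]
        exact main _ contW2 bW2 x hx

lemma SPPS.abs_le_supNorm {a b : ℝ} (hab : a ≤ b) {h : ℝ → ℂ}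
    (hcont : ContinuousOn h (Icc a b)) {x : ℝ} (hx : x ∈ Icc a b) :
    ‖h x‖ ≤ supNorm a b h := by
  refine le_csSup ?_ ⟨x, hx, rfl⟩
  exact ((isCompact_Icc.image_of_continuousOn
    (continuous_norm.comp_continuousOn hcont))).bddAbove

/-- the estimate for the formal powers X⁽ⁿ⁾, Y⁽ⁿ⁾, X̃⁽ⁿ⁾, Ỹ⁽ⁿ⁾. -/
theorem spps_formal_power_estimate (a b x0 : ℝ) (hab : a ≤ b) (hx0 : x0 ∈ Icc a b)
    (p1 p2 q r11 r12 r21 r22 f g : ℝ → ℂ)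
    (hp1 : ContinuousOn p1 (Icc a b)) (hp2 : ContinuousOn p2 (Icc a b))
    (hq : ContinuousOn q (Icc a b))
    (hr11 : ContinuousOn r11 (Icc a b)) (hr12 : ContinuousOn r12 (Icc a b))
    (hr21 : ContinuousOn r21 (Icc a b)) (hr22 : ContinuousOn r22 (Icc a b))
    (hf : ∀ x ∈ Icc a b, f x ≠ 0) (hg : ∀ x ∈ Icc a b, g x ≠ 0)
    (hsys : ∀ x ∈ Icc a b,
      HasDerivWithinAt g (-(p1 x * f x) - q x * g x) (Icc a b) x ∧
      HasDerivWithinAt f (q x * f x + p2 x * g x) (Icc a b) x)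
    (S St : ℕ → (ℝ → ℂ) × (ℝ → ℂ))
    (hS : S = spps p1 p2 r11 r12 r21 r22 f g x0 (sppsX0 p2 f g x0) (sppsY0 p1 f g x0))
    (hSt : St = spps p1 p2 r11 r12 r21 r22 f g x0 (sppsXt0 p2 f g x0) (sppsYt0 p1 f g x0))
    (c c1 c2 c3 : ℝ)
    (hc : c = max (max (supNorm a b (sppsX0 p2 f g x0)) (supNorm a b (sppsY0 p1 f g x0)))
      (max (supNorm a b (sppsXt0 p2 f g x0)) (supNorm a b (sppsYt0 p1 f g x0))))
    (hc1 : c1 = max (supNorm a b (fun x => f x ^ 2 * r11 x + g x ^ 2 * r21 x))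
      (supNorm a b (fun x => f x ^ 2 * r12 x + g x ^ 2 * r22 x)))
    (hc2 : c2 = max (supNorm a b (fun x => p1 x / g x ^ 2))
      (supNorm a b (fun x => p2 x / f x ^ 2)))
    (hc3 : c3 = max (max (supNorm a b (fun x => r11 x * f x / g x)) (supNorm a b r12))
      (max (supNorm a b r21) (supNorm a b (fun x => r22 x * g x / f x)))) :
    ∀ n : ℕ, ∀ x ∈ Icc a b,
      max (max (‖(S n).1 x‖) (‖(S n).2 x‖))
          (max (‖(St n).1 x‖) (‖(St n).2 x‖))
        ≤ c * 2 ^ n * (n.factorial : ℝ) * ∑ k ∈ Finset.range (n + 1),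
            (n.choose k : ℝ) * (c1 * c2) ^ k * c3 ^ (n - k) * |x - x0| ^ (n + k)
              / ((n + k).factorial : ℝ) := by
  subst hS hSt hc hc1 hc2 hc3
  have hfc : ContinuousOn f (Icc a b) := fun x hx => ((hsys x hx).2.continuousWithinAt)
  have hgc : ContinuousOn g (Icc a b) := fun x hx => ((hsys x hx).1.continuousWithinAt)
  have hA1c : ContinuousOn (fun x => f x ^ 2 * r11 x + g x ^ 2 * r21 x) (Icc a b) :=
    ((hfc.pow 2).mul hr11).add ((hgc.pow 2).mul hr21)
  have hA2c : ContinuousOn (fun x => f x ^ 2 * r12 x + g x ^ 2 * r22 x) (Icc a b) :=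
    ((hfc.pow 2).mul hr12).add ((hgc.pow 2).mul hr22)
  have h22c : ContinuousOn (fun x => r22 x * (g x / f x)) (Icc a b) :=
    hr22.mul (hgc.div hfc hf)
  have h11c : ContinuousOn (fun x => r11 x * (f x / g x)) (Icc a b) :=
    hr11.mul (hfc.div hgc hg)
  have h22c' : ContinuousOn (fun x => r22 x * g x / f x) (Icc a b) :=
    (hr22.mul hgc).div hfc hf
  have h11c' : ContinuousOn (fun x => r11 x * f x / g x) (Icc a b) :=
    (hr11.mul hfc).div hgc hg
  have hP2c : ContinuousOn (fun x => p2 x / f x ^ 2) (Icc a b) :=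
    hp2.div (hfc.pow 2) (fun x hx => pow_ne_zero 2 (hf x hx))
  have hP1c : ContinuousOn (fun x => p1 x / g x ^ 2) (Icc a b) :=
    hp1.div (hgc.pow 2) (fun x hx => pow_ne_zero 2 (hg x hx))
  have hIP2 : ContinuousOn (fun x => ∫ s in x0..x, p2 s / f s ^ 2) (Icc a b) :=
    SPPS.ContPrim a b x0 hab hx0 _ hP2c
  have hIP1 : ContinuousOn (fun x => ∫ s in x0..x, p1 s / g s ^ 2) (Icc a b) :=
    SPPS.ContPrim a b x0 hab hx0 _ hP1c
  have hX0c : ContinuousOn (sppsX0 p2 f g x0) (Icc a b) := continuousOn_const.mul hIP2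
  have hY0c : ContinuousOn (sppsY0 p1 f g x0) (Icc a b) :=
    continuousOn_const.add (continuousOn_const.mul hIP1)
  have hXt0c : ContinuousOn (sppsXt0 p2 f g x0) (Icc a b) :=
    continuousOn_const.sub (continuousOn_const.mul hIP2)
  have hYt0c : ContinuousOn (sppsYt0 p1 f g x0) (Icc a b) := continuousOn_const.mul hIP1
  set c : ℝ := max (max (supNorm a b (sppsX0 p2 f g x0)) (supNorm a b (sppsY0 p1 f g x0)))
      (max (supNorm a b (sppsXt0 p2 f g x0)) (supNorm a b (sppsYt0 p1 f g x0))) with hc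
  set c1 : ℝ := max (supNorm a b (fun x => f x ^ 2 * r11 x + g x ^ 2 * r21 x))
      (supNorm a b (fun x => f x ^ 2 * r12 x + g x ^ 2 * r22 x)) with hc1
  set c2 : ℝ := max (supNorm a b (fun x => p1 x / g x ^ 2))
      (supNorm a b (fun x => p2 x / f x ^ 2)) with hc2
  set c3 : ℝ := max (max (supNorm a b (fun x => r11 x * f x / g x)) (supNorm a b r12))
      (max (supNorm a b r21) (supNorm a b (fun x => r22 x * g x / f x))) with hc3
  have bA1 : ∀ x ∈ Icc a b, ‖f x ^ 2 * r11 x + g x ^ 2 * r21 x‖ ≤ c1 :=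
    fun x hx => (SPPS.abs_le_supNorm hab hA1c hx).trans (le_max_left _ _)
  have bA2 : ∀ x ∈ Icc a b, ‖f x ^ 2 * r12 x + g x ^ 2 * r22 x‖ ≤ c1 :=
    fun x hx => (SPPS.abs_le_supNorm hab hA2c hx).trans (le_max_right _ _)
  have b21 : ∀ x ∈ Icc a b, ‖r21 x‖ ≤ c3 :=
    fun x hx => (SPPS.abs_le_supNorm hab hr21 hx).trans
      ((le_max_left _ _).trans (le_max_right _ _))
  have b22 : ∀ x ∈ Icc a b, ‖r22 x * (g x / f x)‖ ≤ c3 := fun x hx => by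
    rw [← mul_div_assoc]
    exact (SPPS.abs_le_supNorm hab h22c' hx).trans
      ((le_max_right _ _).trans (le_max_right _ _))
  have b11 : ∀ x ∈ Icc a b, ‖r11 x * (f x / g x)‖ ≤ c3 := fun x hx => by
    rw [← mul_div_assoc]
    exact (SPPS.abs_le_supNorm hab h11c' hx).trans
      ((le_max_left _ _).trans (le_max_left _ _))
  have b12 : ∀ x ∈ Icc a b, ‖r12 x‖ ≤ c3 :=
    fun x hx => (SPPS.abs_le_supNorm hab hr12 hx).trans
      ((le_max_right _ _).trans (le_max_left _ _))
  have bP2 : ∀ x ∈ Icc a b, ‖p2 x / f x ^ 2‖ ≤ c2 :=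
    fun x hx => (SPPS.abs_le_supNorm hab hP2c hx).trans (le_max_right _ _)
  have bP1 : ∀ x ∈ Icc a b, ‖p1 x / g x ^ 2‖ ≤ c2 :=
    fun x hx => (SPPS.abs_le_supNorm hab hP1c hx).trans (le_max_left _ _)
  have bX0 : ∀ x ∈ Icc a b, ‖sppsX0 p2 f g x0 x‖ ≤ c :=
    fun x hx => (SPPS.abs_le_supNorm hab hX0c hx).trans
      ((le_max_left _ _).trans (le_max_left _ _))
  have bY0 : ∀ x ∈ Icc a b, ‖sppsY0 p1 f g x0 x‖ ≤ c :=
    fun x hx => (SPPS.abs_le_supNorm hab hY0c hx).trans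
      ((le_max_right _ _).trans (le_max_left _ _))
  have bXt0 : ∀ x ∈ Icc a b, ‖sppsXt0 p2 f g x0 x‖ ≤ c :=
    fun x hx => (SPPS.abs_le_supNorm hab hXt0c hx).trans
      ((le_max_left _ _).trans (le_max_right _ _))
  have bYt0 : ∀ x ∈ Icc a b, ‖sppsYt0 p1 f g x0 x‖ ≤ c :=
    fun x hx => (SPPS.abs_le_supNorm hab hYt0c hx).trans
      ((le_max_right _ _).trans (le_max_right _ _))
  have E1 := SPPS.Est a b x0 hab hx0 p1 p2 r11 r12 r21 r22 f g
    (sppsX0 p2 f g x0) (sppsY0 p1 f g x0) c c1 c2 c3 hA1c hA2c hr21 h22c hP2c h11c hr12 hP1c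
    hX0c hY0c bA1 bA2 b21 b22 b11 b12 bP2 bP1 bX0 bY0
  have E2 := SPPS.Est a b x0 hab hx0 p1 p2 r11 r12 r21 r22 f g
    (sppsXt0 p2 f g x0) (sppsYt0 p1 f g x0) c c1 c2 c3 hA1c hA2c hr21 h22c hP2c h11c hr12 hP1c
    hXt0c hYt0c bA1 bA2 b21 b22 b11 b12 bP2 bP1 bXt0 bYt0
  intro n x hx
  obtain ⟨-, -, hb1⟩ := E1 n
  obtain ⟨-, -, hb2⟩ := E2 n
  have H1 := hb1 x hx
  have H2 := hb2 x hx
  exact max_le (max_le H1.1 H1.2) (max_le H2.1 H2.2)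
end

section
/- If the coefficients p_1, p_2, q are real-valued and (u_1,v_1)^T, (u_2,v_2)^T are two linearly independent real-valued solutions of the homogeneous Dirac system on [a,b], then the complex combination (u, v) = (u_1 + i u_2, v_1 + i v_2) has the property that both u and v are non-vanishing on [a,b]. -/
open Set

theorem dirac_key (a b : ℝ) (p1 p2 q u1 v1 u2 v2 : ℝ → ℝ)
    (hp1 : ContinuousOn p1 (Icc a b)) (hp2 : ContinuousOn p2 (Icc a b))
    (hq : ContinuousOn q (Icc a b))
    (hsys1 : ∀ x ∈ Icc a b,
      HasDerivWithinAt v1 (-(p1 x * u1 x) - q x * v1 x) (Icc a b) x ∧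
      HasDerivWithinAt u1 (q x * u1 x + p2 x * v1 x) (Icc a b) x)
    (hsys2 : ∀ x ∈ Icc a b,
      HasDerivWithinAt v2 (-(p1 x * u2 x) - q x * v2 x) (Icc a b) x ∧
      HasDerivWithinAt u2 (q x * u2 x + p2 x * v2 x) (Icc a b) x)
    (hLI : LinearIndependent ℝ
      ![fun x : Icc a b => (u1 x.1, v1 x.1), fun x : Icc a b => (u2 x.1, v2 x.1)])
    (x : ℝ) (hx : x ∈ Icc a b) (c1 c2 : ℝ) (hc : ¬ (c1 = 0 ∧ c2 = 0))
    (h1 : c1 * u1 x + c2 * u2 x = 0) (h2 : c1 * v1 x + c2 * v2 x = 0) : False := by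
  have hab : a ≤ b := hx.1.trans hx.2
  obtain ⟨M1, hM1⟩ := isCompact_Icc.exists_bound_of_continuousOn hp1
  obtain ⟨M2, hM2⟩ := isCompact_Icc.exists_bound_of_continuousOn hp2
  obtain ⟨M3, hM3⟩ := isCompact_Icc.exists_bound_of_continuousOn hq
  set M : ℝ := max (max M1 M2) (max M3 0) with hM
  have hM0 : 0 ≤ M := le_trans (le_max_right M3 0) (le_max_right _ _)
  have hbound : ∀ t ∈ Icc a b, |p1 t| ≤ M ∧ |p2 t| ≤ M ∧ |q t| ≤ M := by
    intro t ht
    refine ⟨le_trans (hM1 t ht) ?_, le_trans (hM2 t ht) ?_, le_trans (hM3 t ht) ?_⟩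
    · exact le_trans (le_max_left M1 M2) (le_max_left _ _)
    · exact le_trans (le_max_right M1 M2) (le_max_left _ _)
    · exact le_trans (le_max_left M3 0) (le_max_right _ _)
  -- clamp
  set π : ℝ → ℝ := fun t => max a (min t b) with hπ
  have hπmem : ∀ t, π t ∈ Icc a b := by
    intro t
    exact ⟨le_max_left _ _, max_le hab (min_le_right _ _)⟩
  have hπeq : ∀ t ∈ Icc a b, π t = t := by
    intro t ht
    simp only [hπ]
    rw [min_eq_left ht.2, max_eq_right ht.1]
  set vf : ℝ → ℝ × ℝ → ℝ × ℝ := fun t y =>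
    (q (π t) * y.1 + p2 (π t) * y.2, -(p1 (π t) * y.1) - q (π t) * y.2) with hvf
  set K : NNReal := ⟨2 * M, by positivity⟩ with hK
  have hv : ∀ t, LipschitzOnWith K (vf t) univ := by
    intro t
    rw [lipschitzOnWith_iff_dist_le_mul]
    intro y _ z _
    have hb := hbound (π t) (hπmem t)
    have hd1 : |y.1 - z.1| ≤ dist y z := by
      rw [Prod.dist_eq]; exact le_trans (le_of_eq (Real.dist_eq _ _).symm) (le_max_left _ _)
    have hd2 : |y.2 - z.2| ≤ dist y z := by
      rw [Prod.dist_eq]; exact le_trans (le_of_eq (Real.dist_eq _ _).symm) (le_max_right _ _)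
    have hdist : (0:ℝ) ≤ dist y z := dist_nonneg
    rw [Prod.dist_eq]
    have hKc : (K : ℝ) = 2 * M := rfl
    rw [hKc]
    apply max_le
    · rw [Real.dist_eq]
      have : (vf t y).1 - (vf t z).1 = q (π t) * (y.1 - z.1) + p2 (π t) * (y.2 - z.2) := by
        simp only [hvf]; ring
      rw [this]
      calc |q (π t) * (y.1 - z.1) + p2 (π t) * (y.2 - z.2)|
          ≤ |q (π t)| * |y.1 - z.1| + |p2 (π t)| * |y.2 - z.2| := by
            refine le_trans (abs_add_le _ _) ?_
            rw [abs_mul, abs_mul]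
        _ ≤ M * dist y z + M * dist y z := by
            gcongr
            · exact hb.2.2
            · exact hb.2.1
        _ = 2 * M * dist y z := by ring
    · rw [Real.dist_eq]
      have : (vf t y).2 - (vf t z).2 = -(p1 (π t) * (y.1 - z.1)) - q (π t) * (y.2 - z.2) := by
        simp only [hvf]; ring
      rw [this]
      calc |(-(p1 (π t) * (y.1 - z.1)) - q (π t) * (y.2 - z.2))|
          ≤ |p1 (π t)| * |y.1 - z.1| + |q (π t)| * |y.2 - z.2| := by
            refine le_trans (abs_sub _ _) ?_
            rw [abs_neg, abs_mul, abs_mul]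
        _ ≤ M * dist y z + M * dist y z := by
            gcongr
            · exact hb.1
            · exact hb.2.2
        _ = 2 * M * dist y z := by ring
  set w : ℝ → ℝ × ℝ := fun t => (c1 * u1 t + c2 * u2 t, c1 * v1 t + c2 * v2 t) with hw
  have hwderiv : ∀ t ∈ Icc a b, HasDerivWithinAt w (vf t (w t)) (Icc a b) t := by
    intro t ht
    obtain ⟨hv1, hu1⟩ := hsys1 t ht
    obtain ⟨hv2', hu2⟩ := hsys2 t ht
    have hA : HasDerivWithinAt (fun s => c1 * u1 s + c2 * u2 s)
        (c1 * (q t * u1 t + p2 t * v1 t) + c2 * (q t * u2 t + p2 t * v2 t)) (Icc a b) t :=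
      (hu1.const_mul c1).add (hu2.const_mul c2)
    have hB : HasDerivWithinAt (fun s => c1 * v1 s + c2 * v2 s)
        (c1 * (-(p1 t * u1 t) - q t * v1 t) + c2 * (-(p1 t * u2 t) - q t * v2 t)) (Icc a b) t :=
      (hv1.const_mul c1).add (hv2'.const_mul c2)
    have := hA.prodMk hB
    convert this using 1
    simp only [hvf, hw, hπeq t ht]
    exact Prod.ext (by ring) (by ring)
  have hwcontR : ContinuousOn w (Icc x b) := by
    intro t ht
    exact ((hwderiv t ⟨hx.1.trans ht.1, ht.2⟩).continuousWithinAt).mono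
      (Icc_subset_Icc_left hx.1)
  have hwcontL : ContinuousOn w (Icc a x) := by
    intro t ht
    exact ((hwderiv t ⟨ht.1, ht.2.trans hx.2⟩).continuousWithinAt).mono
      (Icc_subset_Icc_right hx.2)
  have hg : ∀ (s : Set ℝ) (t : ℝ), HasDerivWithinAt (fun _ : ℝ => ((0,0) : ℝ × ℝ))
      (vf t ((0,0) : ℝ × ℝ)) s t := by
    intro s t
    have h0 : vf t ((0,0) : ℝ × ℝ) = (0, 0) := by simp [hvf]
    rw [h0]
    exact hasDerivWithinAt_const t s _
  have hzeroR : EqOn w (fun _ => ((0,0) : ℝ × ℝ)) (Icc x b) := by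
    apply ODE_solution_unique_of_mem_Icc_right (s := fun _ => (univ : Set (ℝ × ℝ)))
      (fun t _ => hv t) hwcontR
    · intro t ht
      have htab : t ∈ Icc a b := ⟨hx.1.trans ht.1, le_of_lt ht.2⟩
      exact (hwderiv t htab).mono_of_mem_nhdsWithin (Icc_mem_nhdsGE_of_mem ⟨htab.1, ht.2⟩)
    · intro t _; trivial
    · exact continuousOn_const
    · intro t ht; exact hg _ t
    · intro t _; trivial
    · show w x = (0, 0)
      simp only [hw]
      exact Prod.ext h1 h2
  have hzeroL : EqOn w (fun _ => ((0,0) : ℝ × ℝ)) (Icc a x) := by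
    apply ODE_solution_unique_of_mem_Icc_left (s := fun _ => (univ : Set (ℝ × ℝ)))
      (fun t _ => hv t) hwcontL
    · intro t ht
      have htab : t ∈ Icc a b := ⟨le_of_lt ht.1, ht.2.trans hx.2⟩
      exact (hwderiv t htab).mono_of_mem_nhdsWithin (Icc_mem_nhdsLE_of_mem ⟨ht.1, htab.2⟩)
    · intro t _; trivial
    · exact continuousOn_const
    · intro t ht; exact hg _ t
    · intro t _; trivial
    · show w x = (0, 0)
      simp only [hw]
      exact Prod.ext h1 h2
  have hzero : ∀ t ∈ Icc a b, w t = (0, 0) := by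
    intro t ht
    rcases le_total t x with h | h
    · exact hzeroL ⟨ht.1, h⟩
    · exact hzeroR ⟨h, ht.2⟩
  have := Fintype.linearIndependent_iff.mp hLI ![c1, c2] ?_ 
  · exact hc ⟨this 0, this 1⟩
  · funext t
    simp only [Fin.sum_univ_two, Matrix.cons_val_zero, Matrix.cons_val_one, Matrix.head_cons,
      Pi.add_apply, Pi.smul_apply, Pi.zero_apply, Prod.smul_mk, smul_eq_mul]
    have := hzero t.1 t.2
    simp only [hw] at this
    rw [Prod.mk_add_mk]
    exact this

/-- for real-valued coefficients, if (u₁,v₁)ᵀ, (u₂,v₂)ᵀ are two linearly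
independent real solutions of the homogeneous Dirac system on [a,b], then both components
of the complex combination (u₁ + i u₂, v₁ + i v₂) are non-vanishing on [a,b]. -/
theorem complex_combination_nonvanishing (a b : ℝ) (p1 p2 q u1 v1 u2 v2 : ℝ → ℝ)
    (hp1 : ContinuousOn p1 (Icc a b)) (hp2 : ContinuousOn p2 (Icc a b))
    (hq : ContinuousOn q (Icc a b))
    (hsys1 : ∀ x ∈ Icc a b,
      HasDerivWithinAt v1 (-(p1 x * u1 x) - q x * v1 x) (Icc a b) x ∧
      HasDerivWithinAt u1 (q x * u1 x + p2 x * v1 x) (Icc a b) x)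
    (hsys2 : ∀ x ∈ Icc a b,
      HasDerivWithinAt v2 (-(p1 x * u2 x) - q x * v2 x) (Icc a b) x ∧
      HasDerivWithinAt u2 (q x * u2 x + p2 x * v2 x) (Icc a b) x)
    (hLI : LinearIndependent ℝ
      ![fun x : Icc a b => (u1 x.1, v1 x.1), fun x : Icc a b => (u2 x.1, v2 x.1)]) :
    ∀ x ∈ Icc a b,
      (u1 x : ℂ) + Complex.I * (u2 x : ℂ) ≠ 0 ∧
      (v1 x : ℂ) + Complex.I * (v2 x : ℂ) ≠ 0 := by
  intro x hx
  constructor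
  · intro h
    have hre : u1 x = 0 := by
      have := congrArg Complex.re h
      simpa using this
    have him : u2 x = 0 := by
      have := congrArg Complex.im h
      simpa using this
    by_cases hv0 : v1 x = 0 ∧ v2 x = 0
    · exact dirac_key a b p1 p2 q u1 v1 u2 v2 hp1 hp2 hq hsys1 hsys2 hLI x hx 1 0
        (by simp) (by simp [hre]) (by simp [hv0.1])
    · exact dirac_key a b p1 p2 q u1 v1 u2 v2 hp1 hp2 hq hsys1 hsys2 hLI x hx
        (-(v2 x)) (v1 x)
        (by
          intro hcc
          exact hv0 ⟨hcc.2, by simpa using hcc.1⟩)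
        (by rw [hre, him]; ring) (by ring)
  · intro h
    have hre : v1 x = 0 := by
      have := congrArg Complex.re h
      simpa using this
    have him : v2 x = 0 := by
      have := congrArg Complex.im h
      simpa using this
    by_cases hu0 : u1 x = 0 ∧ u2 x = 0
    · exact dirac_key a b p1 p2 q u1 v1 u2 v2 hp1 hp2 hq hsys1 hsys2 hLI x hx 1 0
        (by simp) (by simp [hu0.1]) (by simp [hre])
    · exact dirac_key a b p1 p2 q u1 v1 u2 v2 hp1 hp2 hq hsys1 hsys2 hLI x hx
        (-(u2 x)) (u1 x)
        (by
          intro hcc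
          exact hu0 ⟨hcc.2, by simpa using hcc.1⟩)
        (by ring) (by rw [hre, him]; ring)
end

section
/- If (u_1,v_1)^T and (u_2,v_2)^T are two linearly independent solutions of the homogeneous Dirac system on [a,b], then there exist complex constants c_1, c_2 such that both u = c_1 u_1 + c_2 u_2 and v = c_1 v_1 + c_2 v_2 have no zeros on [a,b]; moreover the set of ratios [c_1 : c_2] ∈ ℂP¹ for which the combination vanishes somewhere has measure zero. -/
open Set MeasureTheory Module

lemma curve_bad_set_null {a b : ℝ} (w1 w2 d1 d2 : ℝ → ℂ)
    (h1 : ∀ x ∈ Icc a b, HasDerivWithinAt w1 (d1 x) (Icc a b) x)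
    (h2 : ∀ x ∈ Icc a b, HasDerivWithinAt w2 (d2 x) (Icc a b) x)
    (hd1 : ContinuousOn d1 (Icc a b)) (hd2 : ContinuousOn d2 (Icc a b))
    (hnz : ∀ x ∈ Icc a b, w1 x ≠ 0 ∨ w2 x ≠ 0) :
    volume {z : ℂ | ∃ x ∈ Icc a b, w1 x + z * w2 x = 0} = 0 := by
  classical
  have hw1c : ContinuousOn w1 (Icc a b) := fun x hx => (h1 x hx).continuousWithinAt
  have hw2c : ContinuousOn w2 (Icc a b) := fun x hx => (h2 x hx).continuousWithinAt
  set s : Set ℝ := {x | x ∈ Icc a b ∧ w2 x ≠ 0} with hs_def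
  set f : ℝ → ℂ := fun x => -w1 x / w2 x with hf_def
  have hsub : {z : ℂ | ∃ x ∈ Icc a b, w1 x + z * w2 x = 0} ⊆ f '' s := by
    rintro z ⟨x, hx, hz⟩
    have hw2 : w2 x ≠ 0 := by
      intro h0
      rcases hnz x hx with h | h
      · rw [h0, mul_zero, add_zero] at hz; exact h hz
      · exact h h0
    refine ⟨x, ⟨hx, hw2⟩, ?_⟩
    rw [hf_def]
    field_simp
    linear_combination -hz
  refine measure_mono_null hsub ?_
  -- the image has Hausdorff dimension at most 1
  have hdim : dimH (f '' s) ≤ 1 := by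
    refine le_trans (dimH_image_le_of_locally_lipschitzOn ?_) ?_
    · rintro x ⟨hxI, hx2⟩
      -- find δ such that ‖w2‖ is bounded below near x
      have htend : Filter.Tendsto (fun y => ‖w2 y‖) (nhdsWithin x (Icc a b)) (nhds ‖w2 x‖) :=
        (hw2c x hxI).norm
      have hhalf : ‖w2 x‖ / 2 < ‖w2 x‖ := half_lt_self (norm_pos_iff.mpr hx2)
      have hev : ∀ᶠ y in nhdsWithin x (Icc a b), ‖w2 x‖ / 2 < ‖w2 y‖ :=
        htend.eventually_const_lt hhalf
      obtain ⟨δ, hδ, hball⟩ := Metric.mem_nhdsWithin_iff.mp hev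
      set t : Set ℝ := Icc a b ∩ Icc (x - δ/2) (x + δ/2) with ht_def
      have htIcc : t ⊆ Icc a b := inter_subset_left
      have hw2t : ∀ y ∈ t, w2 y ≠ 0 := by
        rintro y ⟨hy1, hy2⟩
        have hdist : dist y x < δ := by
          rw [Real.dist_eq, abs_lt]
          exact ⟨by linarith [hy2.1], by linarith [hy2.2]⟩
        have hlow := hball ⟨Metric.mem_ball.mpr hdist, hy1⟩
        simp only [mem_setOf_eq] at hlow
        intro h0; rw [h0, norm_zero] at hlow
        have hpos : (0:ℝ) < ‖w2 x‖ := norm_pos_iff.mpr hx2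
        linarith
      set g' : ℝ → ℂ := fun y => ((-(d1 y)) * w2 y - (-(w1 y)) * d2 y) / (w2 y) ^ 2 with hg'_def
      have hfd : ∀ y ∈ t, HasDerivWithinAt f (g' y) t y := by
        intro y hy
        have H1 := ((h1 y (htIcc hy)).mono htIcc).neg
        have H2 := (h2 y (htIcc hy)).mono htIcc
        exact H1.div H2 (hw2t y hy)
      have hg'c : ContinuousOn g' t := by
        have c1 := (hd1.mono htIcc).neg.mul (hw2c.mono htIcc)
        have c2 := ((hw1c.mono htIcc).neg).mul (hd2.mono htIcc)
        exact (c1.sub c2).div ((hw2c.mono htIcc).pow 2) (fun y hy => pow_ne_zero 2 (hw2t y hy))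
      have ht_compact : IsCompact t := isCompact_Icc.inter_right isClosed_Icc
      obtain ⟨M, hM⟩ := ht_compact.exists_bound_of_continuousOn hg'c
      refine ⟨M.toNNReal, t, ?_, ?_⟩
      · rw [mem_nhdsWithin_iff_exists_mem_nhds_inter]
        refine ⟨Icc (x - δ/2) (x + δ/2), Icc_mem_nhds (by linarith) (by linarith), ?_⟩
        rintro y ⟨hy1, hy2⟩
        exact ⟨hy2.1, hy1⟩
      · refine ((convex_Icc a b).inter (convex_Icc _ _)).lipschitzOnWith_of_nnnorm_hasDerivWithin_le
          hfd ?_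
        intro y hy
        rw [← norm_toNNReal]
        exact Real.toNNReal_le_toNNReal (hM y hy)
    · exact le_trans (dimH_mono (subset_univ s)) (Real.dimH_univ).le
  have h2 : ((finrank ℝ ℂ : NNReal) : ℝ) = (finrank ℝ ℂ : ℝ) := by push_cast; ring
  haveI : (μH[((finrank ℝ ℂ : NNReal) : ℝ)] : Measure ℂ).IsAddHaarMeasure := by
    rw [h2]; exact isAddHaarMeasure_hausdorffMeasure
  have habs : (volume : Measure ℂ) ≪ μH[((finrank ℝ ℂ : NNReal) : ℝ)] := by
    rw [Measure.isAddLeftInvariant_eq_smul (volume : Measure ℂ) μH[((finrank ℝ ℂ : NNReal) : ℝ)]]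
    exact Measure.smul_absolutelyContinuous
  refine measure_zero_of_dimH_lt habs (lt_of_le_of_lt hdim ?_)
  rw [Complex.finrank_real_complex]
  exact_mod_cast one_lt_two

/-- for two linearly independent solutions of the homogeneous Dirac system
there exist complex constants c₁, c₂ such that both combinations c₁u₁+c₂u₂ and c₁v₁+c₂v₂
have no zeros on [a,b]; moreover the set of ratios (in the affine chart z ↦ [1 : z] of ℂP¹)
for which the combination vanishes somewhere has measure zero. -/
theorem exists_nonvanishing_combination (a b : ℝ) (p1 p2 q : ℝ → ℂ) (u1 v1 u2 v2 : ℝ → ℂ)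
    (hp1 : ContinuousOn p1 (Icc a b)) (hp2 : ContinuousOn p2 (Icc a b))
    (hq : ContinuousOn q (Icc a b))
    (hsys1 : ∀ x ∈ Icc a b,
      HasDerivWithinAt v1 (-(p1 x * u1 x) - q x * v1 x) (Icc a b) x ∧
      HasDerivWithinAt u1 (q x * u1 x + p2 x * v1 x) (Icc a b) x)
    (hsys2 : ∀ x ∈ Icc a b,
      HasDerivWithinAt v2 (-(p1 x * u2 x) - q x * v2 x) (Icc a b) x ∧
      HasDerivWithinAt u2 (q x * u2 x + p2 x * v2 x) (Icc a b) x)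
    (hLI : LinearIndependent ℂ
      ![fun x : Icc a b => (u1 x.1, v1 x.1), fun x : Icc a b => (u2 x.1, v2 x.1)]) :
    (∃ c1 c2 : ℂ, ∀ x ∈ Icc a b,
      c1 * u1 x + c2 * u2 x ≠ 0 ∧ c1 * v1 x + c2 * v2 x ≠ 0) ∧
    volume {z : ℂ | ∃ x ∈ Icc a b,
      u1 x + z * u2 x = 0 ∨ v1 x + z * v2 x = 0} = 0 := by
  classical
  have hab : a ≤ b := by
    by_contra h
    have hne := hLI.ne_zero 0
    rw [Matrix.cons_val_zero] at hne
    exact hne (funext fun x => absurd (le_trans x.2.1 x.2.2) h)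
  obtain ⟨C1, hC1⟩ := isCompact_Icc.exists_bound_of_continuousOn hp1
  obtain ⟨C2, hC2⟩ := isCompact_Icc.exists_bound_of_continuousOn hp2
  obtain ⟨C3, hC3⟩ := isCompact_Icc.exists_bound_of_continuousOn hq
  set C : ℝ := max C1 (max C2 C3) with hC_def
  have hC : ∀ x ∈ Icc a b, ‖p1 x‖ ≤ C ∧ ‖p2 x‖ ≤ C ∧ ‖q x‖ ≤ C := fun x hx =>
    ⟨(hC1 x hx).trans (le_max_left _ _),
     (hC2 x hx).trans ((le_max_left _ _).trans (le_max_right _ _)),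
     (hC3 x hx).trans ((le_max_right _ _).trans (le_max_right _ _))⟩
  have hC0 : 0 ≤ C := le_trans (norm_nonneg _) (hC a ⟨le_rfl, hab⟩).1
  set V : ℝ → ℂ × ℂ → ℂ × ℂ := fun t z =>
    if t ∈ Icc a b then (q t * z.1 + p2 t * z.2, -(p1 t * z.1) - q t * z.2) else 0 with hV_def
  have hVlip : ∀ t, LipschitzWith (Real.toNNReal (2 * C)) (V t) := by
    intro t
    apply LipschitzWith.of_dist_le_mul
    intro z w
    have hK : ((Real.toNNReal (2 * C) : NNReal) : ℝ) = 2 * C :=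
      Real.coe_toNNReal _ (by linarith)
    rw [hK]
    by_cases ht : t ∈ Icc a b
    · simp only [hV_def, if_pos ht]
      obtain ⟨hb1, hb2, hb3⟩ := hC t ht
      have hd1 : dist z.1 w.1 ≤ dist z w := by rw [Prod.dist_eq]; exact le_max_left _ _
      have hd2 : dist z.2 w.2 ≤ dist z w := by rw [Prod.dist_eq]; exact le_max_right _ _
      rw [Prod.dist_eq]
      have hest : ∀ α β : ℂ, ‖α‖ ≤ C → ‖β‖ ≤ C →
          ‖α * (z.1 - w.1) + β * (z.2 - w.2)‖ ≤ 2 * C * dist z w := by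
        intro α β hα hβ
        calc ‖α * (z.1 - w.1) + β * (z.2 - w.2)‖
            ≤ ‖α * (z.1 - w.1)‖ + ‖β * (z.2 - w.2)‖ := norm_add_le _ _
          _ = ‖α‖ * dist z.1 w.1 + ‖β‖ * dist z.2 w.2 := by
              rw [norm_mul, norm_mul, dist_eq_norm, dist_eq_norm]
          _ ≤ C * dist z w + C * dist z w :=
              add_le_add (mul_le_mul hα hd1 dist_nonneg hC0) (mul_le_mul hβ hd2 dist_nonneg hC0)
          _ = 2 * C * dist z w := by ring
      apply max_le
      · rw [dist_eq_norm]
        have he : q t * z.1 + p2 t * z.2 - (q t * w.1 + p2 t * w.2) =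
            q t * (z.1 - w.1) + p2 t * (z.2 - w.2) := by ring
        rw [he]
        exact hest _ _ hb3 hb2
      · rw [dist_eq_norm]
        have he : -(p1 t * z.1) - q t * z.2 - (-(p1 t * w.1) - q t * w.2) =
            (-p1 t) * (z.1 - w.1) + (-q t) * (z.2 - w.2) := by ring
        rw [he]
        exact hest _ _ (by rwa [norm_neg]) (by rwa [norm_neg])
    · simp only [hV_def, if_neg ht]
      rw [dist_self]
      positivity
  have hkey : ∀ c1 c2 : ℂ, ∀ x0 ∈ Icc a b,
      c1 * u1 x0 + c2 * u2 x0 = 0 → c1 * v1 x0 + c2 * v2 x0 = 0 → c1 = 0 ∧ c2 = 0 := by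
    intro c1 c2 x0 hx0 hu0 hv0
    set F : ℝ → ℂ × ℂ := fun x => (c1 * u1 x + c2 * u2 x, c1 * v1 x + c2 * v2 x) with hF_def
    have hFd : ∀ t ∈ Icc a b, HasDerivWithinAt F (V t (F t)) (Icc a b) t := by
      intro t ht
      have h1 := hsys1 t ht
      have h2 := hsys2 t ht
      have hD := ((h1.2.const_mul c1).add (h2.2.const_mul c2)).prodMk
        ((h1.1.const_mul c1).add (h2.1.const_mul c2))
      convert hD using 1
      · rfl
      simp only [hV_def, hF_def, if_pos ht]
      exact Prod.ext (by ring) (by ring)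
    have hFc : ContinuousOn F (Icc a b) := fun y hy => (hFd y hy).continuousWithinAt
    have hGd : ∀ t ∈ Icc a b, HasDerivWithinAt (fun _ : ℝ => (0 : ℂ × ℂ))
        (V t ((fun _ : ℝ => (0 : ℂ × ℂ)) t)) (Icc a b) t := by
      intro t ht
      have hz : V t (0 : ℂ × ℂ) = 0 := by
        by_cases h : t ∈ Icc a b <;> simp [hV_def, h]
      rw [hz]
      exact hasDerivWithinAt_const _ _ _
    have hlips : ∀ t, LipschitzOnWith (Real.toNNReal (2 * C)) (V t)
        ((fun _ : ℝ => (univ : Set (ℂ × ℂ))) t) := fun t => (hVlip t).lipschitzOnWith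
    have hF0 : F x0 = (fun _ : ℝ => (0 : ℂ × ℂ)) x0 := Prod.ext hu0 hv0
    have hright : EqOn F (fun _ : ℝ => (0 : ℂ × ℂ)) (Icc x0 b) := by
      apply ODE_solution_unique_of_mem_Icc_right (fun t _ => hlips t)
        (hFc.mono (Icc_subset_Icc_left hx0.1)) ?_ (fun _ _ => mem_univ _)
        continuousOn_const ?_ (fun _ _ => mem_univ _) hF0
      · intro t ht
        have htI : t ∈ Icc a b := ⟨hx0.1.trans ht.1, ht.2.le⟩
        exact (hFd t htI).mono_of_mem_nhdsWithin (Icc_mem_nhdsGE_of_mem ⟨htI.1, ht.2⟩)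
      · intro t ht
        have htI : t ∈ Icc a b := ⟨hx0.1.trans ht.1, ht.2.le⟩
        exact (hGd t htI).mono_of_mem_nhdsWithin (Icc_mem_nhdsGE_of_mem ⟨htI.1, ht.2⟩)
    have hleft : EqOn F (fun _ : ℝ => (0 : ℂ × ℂ)) (Icc a x0) := by
      apply ODE_solution_unique_of_mem_Icc_left (fun t _ => hlips t)
        (hFc.mono (Icc_subset_Icc_right hx0.2)) ?_ (fun _ _ => mem_univ _)
        continuousOn_const ?_ (fun _ _ => mem_univ _) hF0
      · intro t ht
        have htI : t ∈ Icc a b := ⟨ht.1.le, ht.2.trans hx0.2⟩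
        exact (hFd t htI).mono_of_mem_nhdsWithin (Icc_mem_nhdsLE_of_mem ⟨ht.1, htI.2⟩)
      · intro t ht
        have htI : t ∈ Icc a b := ⟨ht.1.le, ht.2.trans hx0.2⟩
        exact (hGd t htI).mono_of_mem_nhdsWithin (Icc_mem_nhdsLE_of_mem ⟨ht.1, htI.2⟩)
    have hall : ∀ x ∈ Icc a b, F x = 0 := by
      intro x hx
      rcases le_total x x0 with h | h
      · exact hleft ⟨hx.1, h⟩
      · exact hright ⟨h, hx.2⟩
    have hzero := Fintype.linearIndependent_iff.mp hLI ![c1, c2] ?_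
    · exact ⟨by simpa using hzero 0, by simpa using hzero 1⟩
    · rw [Fin.sum_univ_two]
      simp only [Matrix.cons_val_zero, Matrix.cons_val_one, Matrix.head_cons]
      funext x
      have hx := hall x.1 x.2
      have hx1 : c1 * u1 x.1 + c2 * u2 x.1 = 0 := congrArg Prod.fst hx
      have hx2 : c1 * v1 x.1 + c2 * v2 x.1 = 0 := congrArg Prod.snd hx
      simp [Prod.ext_iff, smul_eq_mul, hx1, hx2]
  have hu12 : ∀ x ∈ Icc a b, u1 x ≠ 0 ∨ u2 x ≠ 0 := by
    intro x hx
    by_contra h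
    push_neg at h
    obtain ⟨h1, h2⟩ := h
    have h3 := hkey (v2 x) (-v1 x) x hx (by rw [h1, h2]; ring) (by ring)
    have hv1 : v1 x = 0 := by simpa [neg_eq_zero] using h3.2
    have h4 := hkey 1 0 x hx (by rw [h1]; ring) (by rw [hv1]; ring)
    exact one_ne_zero h4.1
  have hv12 : ∀ x ∈ Icc a b, v1 x ≠ 0 ∨ v2 x ≠ 0 := by
    intro x hx
    by_contra h
    push_neg at h
    obtain ⟨h1, h2⟩ := h
    have h3 := hkey (u2 x) (-u1 x) x hx (by ring) (by rw [h1, h2]; ring)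
    have hu1 : u1 x = 0 := by simpa [neg_eq_zero] using h3.2
    have h4 := hkey 1 0 x hx (by rw [hu1]; ring) (by rw [h1]; ring)
    exact one_ne_zero h4.1
  have hu1c : ContinuousOn u1 (Icc a b) := fun x hx => (hsys1 x hx).2.continuousWithinAt
  have hv1c : ContinuousOn v1 (Icc a b) := fun x hx => (hsys1 x hx).1.continuousWithinAt
  have hu2c : ContinuousOn u2 (Icc a b) := fun x hx => (hsys2 x hx).2.continuousWithinAt
  have hv2c : ContinuousOn v2 (Icc a b) := fun x hx => (hsys2 x hx).1.continuousWithinAt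
  have hBu := curve_bad_set_null u1 u2 (fun x => q x * u1 x + p2 x * v1 x)
    (fun x => q x * u2 x + p2 x * v2 x)
    (fun x hx => (hsys1 x hx).2) (fun x hx => (hsys2 x hx).2)
    ((hq.mul hu1c).add (hp2.mul hv1c)) ((hq.mul hu2c).add (hp2.mul hv2c)) hu12
  have hBv := curve_bad_set_null v1 v2 (fun x => -(p1 x * u1 x) - q x * v1 x)
    (fun x => -(p1 x * u2 x) - q x * v2 x)
    (fun x hx => (hsys1 x hx).1) (fun x hx => (hsys2 x hx).1)
    (((hp1.mul hu1c).neg).sub (hq.mul hv1c)) (((hp1.mul hu2c).neg).sub (hq.mul hv2c)) hv12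
  have hBnull : volume {z : ℂ | ∃ x ∈ Icc a b,
      u1 x + z * u2 x = 0 ∨ v1 x + z * v2 x = 0} = 0 := by
    refine measure_mono_null (?_ : _ ⊆ {z : ℂ | ∃ x ∈ Icc a b, u1 x + z * u2 x = 0} ∪
      {z : ℂ | ∃ x ∈ Icc a b, v1 x + z * v2 x = 0}) (measure_union_null hBu hBv)
    rintro z ⟨x, hx, h | h⟩
    · exact Or.inl ⟨x, hx, h⟩
    · exact Or.inr ⟨x, hx, h⟩
  refine ⟨?_, hBnull⟩
  obtain ⟨z, hz⟩ : ∃ z : ℂ, z ∉ {z : ℂ | ∃ x ∈ Icc a b,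
      u1 x + z * u2 x = 0 ∨ v1 x + z * v2 x = 0} := by
    by_contra h
    push_neg at h
    exact isOpen_univ.measure_ne_zero (volume : Measure ℂ) univ_nonempty
      ((eq_univ_iff_forall.mpr h) ▸ hBnull)
  refine ⟨1, z, fun x hx => ⟨?_, ?_⟩⟩
  · intro h0
    exact hz ⟨x, hx, Or.inl (by rw [← h0]; ring)⟩
  · intro h0
    exact hz ⟨x, hx, Or.inr (by rw [← h0]; ring)⟩
end

section
/- For the Sturm-Liouville equation rewritten as the Dirac system v' + (u_0'/u_0) v = ω r u, -u' + (u_0'/u_0) u = -ω v/p, the pair (u_0, 1/u_0) is a non-vanishing solution of the corresponding homogeneous system (ω = 0), and the SPPS formal powers constructed from it satisfy X^{(2n)} = Y^{(2n+1)} = 0, X^{(2n-1)} = 𝒳^{(2n-1)}, Y^{(2n)} = 𝒳^{(2n)}, X̃^{(2n+1)} = Ỹ^{(2n)} = 0, X̃^{(2n)} = 𝒳̃^{(2n)}, Ỹ^{(2n+1)} = 𝒳̃^{(2n+1)}, where 𝒳^{(n)}, 𝒳̃^{(n)} are the classical Kravchenko–Porter formal powers. -/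
open Set intervalIntegral MeasureTheory

/-- The classical Kravchenko–Porter formal powers 𝒳⁽ⁿ⁾. -/
noncomputable def calX (p r u0 : ℝ → ℂ) (x0 : ℝ) : ℕ → ℝ → ℂ
  | 0 => fun _ => 1
  | n + 1 => fun x => (n + 1 : ℂ) * ∫ s in x0..x,
      calX p r u0 x0 n s *
        (if (n + 1) % 2 = 0 then u0 s ^ 2 * r s else 1 / (u0 s ^ 2 * p s))

/-- The classical Kravchenko–Porter formal powers 𝒳̃⁽ⁿ⁾ (parities interchanged). -/
noncomputable def calXt (p r u0 : ℝ → ℂ) (x0 : ℝ) : ℕ → ℝ → ℂ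
  | 0 => fun _ => 1
  | n + 1 => fun x => (n + 1 : ℂ) * ∫ s in x0..x,
      calXt p r u0 x0 n s *
        (if (n + 1) % 2 = 1 then u0 s ^ 2 * r s else 1 / (u0 s ^ 2 * p s))

lemma sppsRed_fst (p r u0 X0 Y0 : ℝ → ℂ) (x0 : ℝ) (n : ℕ) :
    (spps (fun _ => 0) (fun _ => 0) r (fun _ => 0) (fun _ => 0)
      (fun x => -(1 / p x)) u0 (fun x => (u0 x)⁻¹) x0 X0 Y0 (n + 1)).1
    = fun x => ((n : ℂ) + 1) * ∫ s in x0..x,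
        (spps (fun _ => 0) (fun _ => 0) r (fun _ => 0) (fun _ => 0)
          (fun x => -(1 / p x)) u0 (fun x => (u0 x)⁻¹) x0 X0 Y0 n).2 s
          * (1 / (u0 s ^ 2 * p s)) := by
  funext x
  show ((n : ℂ) + 1) * ∫ s in x0..x,
      (-(0:ℂ) * _ - (-(1 / p s)) * ((u0 s)⁻¹ / u0 s) *
        (spps (fun _ => 0) (fun _ => 0) r (fun _ => 0) (fun _ => 0)
          (fun x => -(1 / p x)) u0 (fun x => (u0 x)⁻¹) x0 X0 Y0 n).2 s
        + (0:ℂ) / u0 s ^ 2 * _) = _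
  congr 1
  apply intervalIntegral.integral_congr
  intro s _
  simp only [neg_mul, zero_mul, neg_zero, zero_add, zero_sub, zero_div, mul_zero, add_zero,
    div_eq_mul_inv, mul_inv, inv_pow, one_mul, neg_neg]
  ring

lemma sppsRed_snd (p r u0 X0 Y0 : ℝ → ℂ) (x0 : ℝ) (n : ℕ) :
    (spps (fun _ => 0) (fun _ => 0) r (fun _ => 0) (fun _ => 0)
      (fun x => -(1 / p x)) u0 (fun x => (u0 x)⁻¹) x0 X0 Y0 (n + 1)).2
    = fun x => ((n : ℂ) + 1) * ∫ s in x0..x,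
        (spps (fun _ => 0) (fun _ => 0) r (fun _ => 0) (fun _ => 0)
          (fun x => -(1 / p x)) u0 (fun x => (u0 x)⁻¹) x0 X0 Y0 n).1 s
          * (u0 s ^ 2 * r s) := by
  funext x
  show ((n : ℂ) + 1) * ∫ s in x0..x,
      (r s * (u0 s / (u0 s)⁻¹) *
        (spps (fun _ => 0) (fun _ => 0) r (fun _ => 0) (fun _ => 0)
          (fun x => -(1 / p x)) u0 (fun x => (u0 x)⁻¹) x0 X0 Y0 n).1 s
        + (0:ℂ) * _ + (0:ℂ) / ((u0 s)⁻¹) ^ 2 * _) = _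
  congr 1
  apply intervalIntegral.integral_congr
  intro s _
  simp only [zero_mul, add_zero, zero_div, div_eq_mul_inv, inv_inv]
  ring

/-- for the Sturm-Liouville equation rewritten as a Dirac system,
(u₀, 1/u₀) is a non-vanishing solution of the homogeneous system, and the SPPS formal
powers built from it coincide (with the stated parity pattern) with the classical
Kravchenko–Porter formal powers. -/
theorem spps_reduces_to_kravchenko_porter (a b x0 : ℝ) (hx0 : x0 ∈ Icc a b)
    (p q r u0 du0 : ℝ → ℂ)
    (hpC : ContinuousOn p (Icc a b)) (hp : ∀ x ∈ Icc a b, p x ≠ 0)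
    (hqC : ContinuousOn q (Icc a b)) (hrC : ContinuousOn r (Icc a b))
    (hu0 : ∀ x ∈ Icc a b, u0 x ≠ 0)
    (hu0d : ∀ x ∈ Icc a b, HasDerivWithinAt u0 (du0 x) (Icc a b) x)
    (hu0eq : ∀ x ∈ Icc a b,
      HasDerivWithinAt (fun t => p t * du0 t) (-(q x * u0 x)) (Icc a b) x)
    (S St : ℕ → (ℝ → ℂ) × (ℝ → ℂ))
    (hS : S = spps (fun _ => 0) (fun _ => 0) r (fun _ => 0) (fun _ => 0)
      (fun x => -(1 / p x)) u0 (fun x => (u0 x)⁻¹) x0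
      (sppsX0 (fun _ => 0) u0 (fun x => (u0 x)⁻¹) x0)
      (sppsY0 (fun _ => 0) u0 (fun x => (u0 x)⁻¹) x0))
    (hSt : St = spps (fun _ => 0) (fun _ => 0) r (fun _ => 0) (fun _ => 0)
      (fun x => -(1 / p x)) u0 (fun x => (u0 x)⁻¹) x0
      (sppsXt0 (fun _ => 0) u0 (fun x => (u0 x)⁻¹) x0)
      (sppsYt0 (fun _ => 0) u0 (fun x => (u0 x)⁻¹) x0)) :
    (∀ x ∈ Icc a b,
      u0 x ≠ 0 ∧ (u0 x)⁻¹ ≠ 0 ∧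
      HasDerivWithinAt (fun t => (u0 t)⁻¹)
        (-(du0 x / u0 x * (u0 x)⁻¹)) (Icc a b) x ∧
      du0 x = du0 x / u0 x * u0 x) ∧
    (∀ n : ℕ, ∀ x ∈ Icc a b,
      (S (2 * n)).1 x = 0 ∧ (S (2 * n + 1)).2 x = 0 ∧
      (S (2 * n + 1)).1 x = calX p r u0 x0 (2 * n + 1) x ∧
      (S (2 * n)).2 x = calX p r u0 x0 (2 * n) x ∧
      (St (2 * n + 1)).1 x = 0 ∧ (St (2 * n)).2 x = 0 ∧
      (St (2 * n)).1 x = calXt p r u0 x0 (2 * n) x ∧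
      (St (2 * n + 1)).2 x = calXt p r u0 x0 (2 * n + 1) x) := by
  constructor
  · intro x hx
    refine ⟨hu0 x hx, inv_ne_zero (hu0 x hx), ?_, (div_mul_cancel₀ _ (hu0 x hx)).symm⟩
    have h1 : HasDerivWithinAt (fun t => (u0 t)⁻¹) (-(u0 x ^ 2)⁻¹ * du0 x) (Icc a b) x := by
      simpa [Function.comp_def] using
        (hasDerivAt_inv (hu0 x hx)).comp_hasDerivWithinAt x (hu0d x hx)
    convert h1 using 1
    rw [div_eq_mul_inv, sq, mul_inv]
    ring
  · have keyS : ∀ n : ℕ,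
        (S (2 * n)).1 = (fun _ => 0) ∧ (S (2 * n)).2 = calX p r u0 x0 (2 * n) ∧
        (S (2 * n + 1)).1 = calX p r u0 x0 (2 * n + 1) ∧
        (S (2 * n + 1)).2 = (fun _ => 0) := by
      intro n
      induction n with
      | zero =>
        have h0 : S 0 = (sppsX0 (fun _ => 0) u0 (fun x => (u0 x)⁻¹) x0,
            sppsY0 (fun _ => 0) u0 (fun x => (u0 x)⁻¹) x0) := by rw [hS]; rfl
        have hX0 : (S 0).1 = (fun _ => 0) := by
          rw [h0]; funext x; simp [sppsX0]
        have hY0 : (S 0).2 = calX p r u0 x0 0 := by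
          rw [h0]; funext x; simp [sppsY0, calX]
        refine ⟨by simpa using hX0, by simpa using hY0, ?_, ?_⟩
        · rw [show (2 * 0 + 1 : ℕ) = 0 + 1 by norm_num, hS, sppsRed_fst, ← hS]
          funext x
          rw [calX, hY0]
          norm_num
        · rw [show (2 * 0 + 1 : ℕ) = 0 + 1 by norm_num, hS, sppsRed_snd, ← hS]
          funext x
          simp [hX0]
      | succ n ih =>
        obtain ⟨_, _, ih3, ih4⟩ := ih
        have e1 : (2 * (n + 1) : ℕ) = (2 * n + 1) + 1 := by ring
        have hX : (S (2 * (n + 1))).1 = (fun _ => 0) := by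
          rw [e1, hS, sppsRed_fst, ← hS]
          funext x
          simp [ih4]
        have hY : (S (2 * (n + 1))).2 = calX p r u0 x0 (2 * (n + 1)) := by
          rw [e1, hS, sppsRed_snd, ← hS]
          funext x
          rw [calX]
          have hmod : ((2 * n + 1 + 1) % 2 : ℕ) = 0 := by omega
          simp only [ih3, hmod]
          norm_num
        refine ⟨hX, hY, ?_, ?_⟩
        · rw [show (2 * (n + 1) + 1 : ℕ) = (2 * (n + 1)) + 1 by ring, hS, sppsRed_fst, ← hS]
          funext x
          rw [calX]
          have hmod : ((2 * (n + 1) + 1) % 2 : ℕ) = 1 := by omega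
          simp only [hY, hmod]
          norm_num
        · rw [show (2 * (n + 1) + 1 : ℕ) = (2 * (n + 1)) + 1 by ring, hS, sppsRed_snd, ← hS]
          funext x
          simp [hX]
    have keySt : ∀ n : ℕ,
        (St (2 * n)).1 = calXt p r u0 x0 (2 * n) ∧ (St (2 * n)).2 = (fun _ => 0) ∧
        (St (2 * n + 1)).1 = (fun _ => 0) ∧
        (St (2 * n + 1)).2 = calXt p r u0 x0 (2 * n + 1) := by
      intro n
      induction n with
      | zero =>
        have h0 : St 0 = (sppsXt0 (fun _ => 0) u0 (fun x => (u0 x)⁻¹) x0,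
            sppsYt0 (fun _ => 0) u0 (fun x => (u0 x)⁻¹) x0) := by rw [hSt]; rfl
        have hX0 : (St 0).1 = calXt p r u0 x0 0 := by
          rw [h0]; funext x; simp [sppsXt0, calXt]
        have hY0 : (St 0).2 = (fun _ => 0) := by
          rw [h0]; funext x; simp [sppsYt0]
        refine ⟨by simpa using hX0, by simpa using hY0, ?_, ?_⟩
        · rw [show (2 * 0 + 1 : ℕ) = 0 + 1 by norm_num, hSt, sppsRed_fst, ← hSt]
          funext x
          simp [hY0]
        · rw [show (2 * 0 + 1 : ℕ) = 0 + 1 by norm_num, hSt, sppsRed_snd, ← hSt]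
          funext x
          rw [calXt, hX0]
          norm_num
      | succ n ih =>
        obtain ⟨_, _, ih3, ih4⟩ := ih
        have e1 : (2 * (n + 1) : ℕ) = (2 * n + 1) + 1 := by ring
        have hX : (St (2 * (n + 1))).1 = calXt p r u0 x0 (2 * (n + 1)) := by
          rw [e1, hSt, sppsRed_fst, ← hSt]
          funext x
          rw [calXt]
          have hmod : ((2 * n + 1 + 1) % 2 : ℕ) = 0 := by omega
          simp only [ih4, hmod]
          norm_num
        have hY : (St (2 * (n + 1))).2 = (fun _ => 0) := by
          rw [e1, hSt, sppsRed_snd, ← hSt]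
          funext x
          simp [ih3]
        refine ⟨hX, hY, ?_, ?_⟩
        · rw [show (2 * (n + 1) + 1 : ℕ) = (2 * (n + 1)) + 1 by ring, hSt, sppsRed_fst, ← hSt]
          funext x
          simp [hY]
        · rw [show (2 * (n + 1) + 1 : ℕ) = (2 * (n + 1)) + 1 by ring, hSt, sppsRed_snd, ← hSt]
          funext x
          rw [calXt]
          have hmod : ((2 * (n + 1) + 1) % 2 : ℕ) = 1 := by omega
          simp only [hX, hmod]
          norm_num
    intro n x _
    obtain ⟨k1, k2, k3, k4⟩ := keyS n
    obtain ⟨l1, l2, l3, l4⟩ := keySt n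
    exact ⟨by rw [k1], by rw [k4], by rw [k3], by rw [k2],
      by rw [l3], by rw [l2], by rw [l1], by rw [l4]⟩
end

section
/- For a general first-order system 𝒫 Y' + 𝒬 Y = λ ℛ Y with 𝒫 invertible at every x, left multiplication by B 𝒫^{-1} followed by the substitution Y = exp((1/2)∫ tr(B B𝒫^{-1}𝒬) ds) U yields a system B U' + P̂ U = λ R̂ U with P̂ symmetric (tr(B P̂) ≡ 0), whose solutions are in bijective correspondence with solutions of the original system. -/
open Set intervalIntegral Matrix

private lemma contOn_mul_entries {A C : ℝ → Matrix (Fin 2) (Fin 2) ℂ} {s : Set ℝ}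
    (hA : ∀ i j, ContinuousOn (fun x => A x i j) s)
    (hC : ∀ i j, ContinuousOn (fun x => C x i j) s) :
    ∀ i j, ContinuousOn (fun x => (A x * C x) i j) s := by
  intro i j
  simp only [Matrix.mul_apply, Fin.sum_univ_two]
  exact ((hA i 0).mul (hC 0 j)).add ((hA i 1).mul (hC 1 j))

/-- a general first-order system `𝒫 Y' + 𝒬 Y = λ ℛ Y` with 𝒫 invertible is
transformed, by left multiplication with B 𝒫⁻¹ and the substitution Y = w U, into a system
`B U' + P̂ U = λ R̂ U` with tr(B P̂) ≡ 0, whose solutions correspond bijectively to those of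
the original system. -/
theorem general_system_to_dirac (a b x0 : ℝ) (hx0 : x0 ∈ Icc a b) (lam : ℂ)
    (P Q R : ℝ → Matrix (Fin 2) (Fin 2) ℂ)
    (hP : ∀ i j, ContinuousOn (fun x => P x i j) (Icc a b))
    (hQc : ∀ i j, ContinuousOn (fun x => Q x i j) (Icc a b))
    (hRc : ∀ i j, ContinuousOn (fun x => R x i j) (Icc a b))
    (hdet : ∀ x ∈ Icc a b, IsUnit (P x).det)
    (B : Matrix (Fin 2) (Fin 2) ℂ) (hB : B = !![0, 1; -1, 0])
    (Qm Rm Phat : ℝ → Matrix (Fin 2) (Fin 2) ℂ)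
    (hQm : Qm = fun x => B * (P x)⁻¹ * Q x)
    (hRm : Rm = fun x => B * (P x)⁻¹ * R x)
    (hPhat : Phat = fun x => Qm x + ((2 : ℂ)⁻¹ * (B * Qm x).trace) • B)
    (w : ℝ → ℂ)
    (hw : w = fun x => Complex.exp ((2 : ℂ)⁻¹ * ∫ s in x0..x, (B * Qm s).trace))
    (Y Y' U U' : ℝ → Fin 2 → ℂ)
    (hY : ∀ x ∈ Icc a b, ∀ i, HasDerivWithinAt (fun t => Y t i) (Y' x i) (Icc a b) x)
    (hU : U = fun x => (w x)⁻¹ • Y x)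
    (hU' : U' = fun x =>
      (w x)⁻¹ • Y' x - ((2 : ℂ)⁻¹ * (B * Qm x).trace * (w x)⁻¹) • Y x) :
    (∀ x ∈ Icc a b, (B * Phat x).trace = 0) ∧
    (∀ x ∈ Icc a b, ∀ i, HasDerivWithinAt (fun t => U t i) (U' x i) (Icc a b) x) ∧
    (∀ x ∈ Icc a b,
      ((P x).mulVec (Y' x) + (Q x).mulVec (Y x) = lam • (R x).mulVec (Y x) ↔
        B.mulVec (U' x) + (Phat x).mulVec (U x) = lam • (Rm x).mulVec (U x))) := by
  -- continuity of entries of P⁻¹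
  have hdetc : ContinuousOn (fun x => (P x).det) (Icc a b) := by
    simp only [Matrix.det_fin_two]
    exact ((hP 0 0).mul (hP 1 1)).sub ((hP 0 1).mul (hP 1 0))
  have hdetne : ∀ x ∈ Icc a b, (P x).det ≠ 0 := fun x hx => (hdet x hx).ne_zero
  have hPinv : ∀ i j, ContinuousOn (fun x => (P x)⁻¹ i j) (Icc a b) := by
    have key : ∀ x, (P x)⁻¹ = ((P x).det)⁻¹ •
        !![P x 1 1, -(P x 0 1); -(P x 1 0), P x 0 0] := by
      intro x
      rw [Matrix.inv_def, Matrix.adjugate_fin_two, Ring.inverse_eq_inv]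
    intro i j
    simp only [key, Matrix.smul_apply, smul_eq_mul]
    have hinvc : ContinuousOn (fun x => ((P x).det)⁻¹) (Icc a b) := hdetc.inv₀ hdetne
    fin_cases i <;> fin_cases j <;> simp <;>
      [exact hinvc.mul (hP 1 1); exact (hinvc.mul (hP 0 1)).neg;
       exact (hinvc.mul (hP 1 0)).neg; exact hinvc.mul (hP 0 0)]
  have hBc : ∀ i j : Fin 2, ContinuousOn (fun _ : ℝ => B i j) (Icc a b) := fun i j =>
    continuousOn_const
  have hQmc : ∀ i j, ContinuousOn (fun x => Qm x i j) (Icc a b) := by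
    rw [hQm]
    exact contOn_mul_entries (contOn_mul_entries hBc hPinv) hQc
  have hBQ : ∀ i j, ContinuousOn (fun x => (B * Qm x) i j) (Icc a b) :=
    contOn_mul_entries hBc hQmc
  have hgc : ContinuousOn (fun x => (B * Qm x).trace) (Icc a b) := by
    simp only [Matrix.trace_fin_two]
    exact (hBQ 0 0).add (hBQ 1 1)
  have hwne : ∀ x, w x ≠ 0 := by
    intro x; rw [hw]; exact Complex.exp_ne_zero _
  have hwinv : ∀ t, (w t)⁻¹ =
      Complex.exp (-((2 : ℂ)⁻¹ * ∫ s in x0..t, (B * Qm s).trace)) := by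
    intro t; rw [hw, ← Complex.exp_neg]
  refine ⟨?_, ?_, ?_⟩
  · -- trace part
    intro x hx
    subst hB
    simp only [hPhat, Matrix.mul_add, Matrix.mul_smul, Matrix.trace_add, Matrix.trace_smul,
      smul_eq_mul]
    have : (!![0, 1; -1, 0] * !![0, 1; -1, 0] : Matrix (Fin 2) (Fin 2) ℂ).trace = -2 := by
      simp [Matrix.trace_fin_two, Matrix.mul_apply, Fin.sum_univ_two]
      ring
    rw [this]; ring
  · -- derivative part
    intro x hx i
    haveI : Fact (x ∈ Icc a b) := ⟨hx⟩
    have hint : IntervalIntegrable (fun s => (B * Qm s).trace) MeasureTheory.volume x0 x :=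
      (hgc.mono (uIcc_subset_Icc hx0 hx)).intervalIntegrable
    have hmeas : StronglyMeasurableAtFilter (fun s => (B * Qm s).trace)
        (nhdsWithin x (Icc a b)) MeasureTheory.volume :=
      hgc.stronglyMeasurableAtFilter_nhdsWithin measurableSet_Icc x
    have hFd : HasDerivWithinAt (fun u => ∫ s in x0..u, (B * Qm s).trace)
        ((B * Qm x).trace) (Icc a b) x :=
      intervalIntegral.integral_hasDerivWithinAt_right hint hmeas (hgc x hx)
    have hD : HasDerivWithinAt
        (fun t => Complex.exp (-((2 : ℂ)⁻¹ * ∫ s in x0..t, (B * Qm s).trace)))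
        (Complex.exp (-((2 : ℂ)⁻¹ * ∫ s in x0..x, (B * Qm s).trace)) *
          (-((2 : ℂ)⁻¹ * (B * Qm x).trace))) (Icc a b) x :=
      ((hFd.const_mul ((2 : ℂ)⁻¹)).neg).cexp
    have hDi := hD.mul (hY x hx i)
    have heq : (fun t => U t i) =
        fun t => Complex.exp (-((2 : ℂ)⁻¹ * ∫ s in x0..t, (B * Qm s).trace)) * Y t i := by
      funext t
      rw [hU]
      simp [Pi.smul_apply, smul_eq_mul, hwinv t]
    rw [heq]
    refine hDi.congr_deriv ?_
    rw [hU']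
    simp only [Pi.sub_apply, Pi.smul_apply, smul_eq_mul, hwinv x]
    ring
  · -- equivalence part
    intro x hx
    have hPunit := hdet x hx
    have hBdet : IsUnit B.det := by
      subst hB; simp [Matrix.det_fin_two_of]
    have hMdet : IsUnit (B * (P x)⁻¹).det := by
      rw [Matrix.det_mul, Matrix.det_nonsing_inv, Ring.inverse_eq_inv]
      exact hBdet.mul (isUnit_iff_ne_zero.2 (inv_ne_zero (hdetne x hx)))
    have hMinj : Function.Injective (B * (P x)⁻¹).mulVec :=
      Matrix.mulVec_injective_iff_isUnit.mpr ((Matrix.isUnit_iff_isUnit_det _).mpr hMdet)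
    have e1 : (B * (P x)⁻¹).mulVec ((P x).mulVec (Y' x) + (Q x).mulVec (Y x)) =
        B.mulVec (Y' x) + (Qm x).mulVec (Y x) := by
      rw [Matrix.mulVec_add, Matrix.mulVec_mulVec, Matrix.mulVec_mulVec, mul_assoc,
        Matrix.nonsing_inv_mul _ hPunit, mul_one, hQm]
    have e2 : (B * (P x)⁻¹).mulVec (lam • (R x).mulVec (Y x)) =
        lam • (Rm x).mulVec (Y x) := by
      rw [Matrix.mulVec_smul, Matrix.mulVec_mulVec, hRm]
    have key1 : ((P x).mulVec (Y' x) + (Q x).mulVec (Y x) = lam • (R x).mulVec (Y x)) ↔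
        (B.mulVec (Y' x) + (Qm x).mulVec (Y x) = lam • (Rm x).mulVec (Y x)) := by
      rw [← e1, ← e2]
      exact (hMinj.eq_iff).symm
    rw [key1]
    -- second step: substitution Y = w U
    have hYx : Y x = w x • U x := by
      rw [hU]
      simp [smul_smul, mul_inv_cancel₀ (hwne x)]
    have hY'x : Y' x = w x • U' x + ((2 : ℂ)⁻¹ * (B * Qm x).trace) • Y x := by
      rw [hU']
      funext i
      simp only [Pi.add_apply, Pi.smul_apply, Pi.sub_apply, smul_eq_mul]
      field_simp [hwne x]
      ring
    have e3 : B.mulVec (Y' x) + (Qm x).mulVec (Y x) =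
        w x • (B.mulVec (U' x) + (Phat x).mulVec (U x)) := by
      rw [hY'x, hYx, hPhat]
      funext i
      simp only [Matrix.mulVec, dotProduct, Fin.sum_univ_two, Pi.add_apply,
        Pi.smul_apply, smul_eq_mul, Matrix.add_apply, Matrix.smul_apply]
      ring
    have e4 : lam • (Rm x).mulVec (Y x) = w x • (lam • (Rm x).mulVec (U x)) := by
      rw [hYx]
      funext i
      simp only [Matrix.mulVec, dotProduct, Fin.sum_univ_two, Pi.smul_apply,
        smul_eq_mul]
      ring
    rw [e3, e4]
    exact ⟨fun h => smul_right_injective _ (hwne x) h, fun h => by rw [h]⟩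
end
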